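/- arXiv:0706.4072 — 4 statements merged into one kernel-verified Lean document; each statement's English description precedes it below -/
import Mathlib

section
/- The only ℂ-subspaces of S that are invariant under all of the operators M_n and D_n (n ∈ I) are {0} and S itself; that is, S is an irreducible module for the Heisenberg Lie algebra of operators spanned by the identity, the M_n, and the D_n. -/
/-!
Setup: `I = {1/2, 3/2, 5/2, …}` is encoded by `ℕ`, with `k : ℕ` corresponding to the
half-odd integer `n = k + 1/2 = (2k+1)/2 ∈ I`.  Half-integers `r ∈ (1/2)ℤ` are encoded
by their doubles `2r ∈ ℤ` (so `r ≥ 0` iff its code is `≥ 0`, and the elements of `I`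
are coded by the odd positive integers `2k+1`).  `Sp = MvPolynomial ℕ ℂ` is the
polynomial algebra `ℂ[y_{1/2}, y_{3/2}, …]`, where `X k` is `y_{k+1/2}`.
-/

open MvPolynomial

noncomputable section

abbrev Sp : Type := MvPolynomial ℕ ℂ

/-- `Mop k` : multiplication by `y_{k+1/2}`. -/
def Mop (k : ℕ) : Module.End ℂ Sp := LinearMap.mulLeft ℂ (X k)

/-- `Dop k` : the formal partial derivative `∂/∂y_{k+1/2}`. -/
def Dop (k : ℕ) : Module.End ℂ Sp := (pderiv k).toLinearMap

/-- The (finite) set of tuples `(n₁, …, n_j) ∈ I^j` with `n₁ + ⋯ + n_j = r`, where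
`r` is coded by `R = 2r ∈ ℕ` and `nᵢ = f i + 1/2` is coded by `f i : ℕ`
(so the doubled constraint reads `∑ᵢ (2 f i + 1) = R`). -/
def tuples (j R : ℕ) : Finset (Fin j → ℕ) :=
  (Fintype.piFinset fun _ : Fin j => Finset.range (R + 1)).filter
    fun f => ∑ i, (2 * f i + 1) = R

/-- `p R` : the coefficient of `x^r` (with `R = 2r`) in `exp(∑_{n∈I} (y_n/n) x^n)`, i.e.
`∑_{j≥0} (1/j!) ∑_{(n₁,…,n_j)∈I^j, ∑nᵢ=r} ∏ᵢ (y_{nᵢ}/nᵢ)`; here `1/nᵢ = 2/(2 f i + 1)`.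
(Terms with `j > R` vanish since each `nᵢ ≥ 1/2`.) -/
def pcoef (R : ℕ) : Sp :=
  ∑ j ∈ Finset.range (R + 1), ((j.factorial : ℂ))⁻¹ •
    ∑ f ∈ tuples j R, ∏ i, (C ((2 : ℂ) / (2 * (f i : ℂ) + 1)) * X (f i))

/-- `dcoef R` : the coefficient of `x^{-r}` (with `R = 2r ≥ 0`) in
`exp(−2 ∑_{n∈I} D_n x^{−n})`, i.e.
`∑_{j≥0} ((−2)^j/j!) ∑_{(n₁,…,n_j)∈I^j, ∑nᵢ=r} D_{n₁}∘⋯∘D_{n_j}`. -/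
def dcoef (R : ℕ) : Module.End ℂ Sp :=
  ∑ j ∈ Finset.range (R + 1), (((-2 : ℂ)) ^ j * ((j.factorial : ℂ))⁻¹) •
    ∑ f ∈ tuples j R, (List.ofFn fun i => Dop (f i)).prod

/-- `dz r` for `r ∈ (1/2)ℤ` (coded by `2r ∈ ℤ`): equal to `dcoef` for `r ≥ 0`,
and (conventionally) `0` for `r < 0`. -/
def dz (r : ℤ) : Module.End ℂ Sp := if 0 ≤ r then dcoef r.toNat else 0

/-- The operator `A_j` (with `j ∈ (1/2)ℤ` coded by `J = 2j ∈ ℤ`), applied to `q`: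
`A_j q = ∑_{r ≥ max(0,−j)} p_r · (d_{r+j} q)`, a locally finite sum. -/
def Afun (J : ℤ) (q : Sp) : Sp := ∑ᶠ R : ℕ, pcoef R * (dz ((R : ℤ) + J) q)


/-- Coefficient formula for the partial derivative. -/
lemma coeff_pderiv_aux (i : ℕ) (u : ℕ →₀ ℕ) (p : Sp) :
    coeff u (pderiv i p) = ((u i : ℂ) + 1) * coeff (u + Finsupp.single i 1) p := by
  induction p using MvPolynomial.induction_on' with
  | monomial s a =>
    rw [pderiv_monomial, coeff_monomial, coeff_monomial]
    by_cases hsi : s i = 0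
    · have h1 : s - Finsupp.single i 1 ≠ u ∨ a * (s i : ℂ) = 0 := by
        right; simp [hsi]
      have h2 : s ≠ u + Finsupp.single i 1 := by
        intro h; apply absurd hsi
        rw [h]; simp
      rcases h1 with h1 | h1
      · simp [h1, h2, hsi]
      · simp [h2, h1]
    · have key : s - Finsupp.single i 1 = u ↔ s = u + Finsupp.single i 1 := by
        constructor
        · intro h
          ext j
          by_cases hj : j = i
          · subst hj
            have := congrArg (fun f => f j) h
            simp [Finsupp.single_apply] at this ⊢
            omega
          · have := congrArg (fun f => f j) h
            simp [Finsupp.single_apply, Ne.symm hj] at this ⊢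
            omega
        · intro h
          subst h
          ext j
          by_cases hj : j = i
          · subst hj; simp
          · simp [Finsupp.single_apply, Ne.symm hj]
      by_cases h : s = u + Finsupp.single i 1
      · subst h
        rw [if_pos (key.mpr rfl), if_pos rfl]
        have hsu : ((u + Finsupp.single i 1 : ℕ →₀ ℕ)) i = u i + 1 := by simp
        rw [hsu]
        push_cast
        ring
      · have h' : ¬ (s - Finsupp.single i 1 = u) := fun hh => h (key.mp hh)
        simp [h, h']
  | add p q hp hq =>
    rw [map_add, coeff_add, coeff_add, hp, hq]
    ring

lemma eq_C_of_totalDegree_zero {p : Sp} (h : p.totalDegree = 0) :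
    p = C (coeff 0 p) := by
  have hs := (totalDegree_eq_zero_iff ℕ p).mp h
  ext m
  by_cases hm : m = 0
  · subst hm; simp
  · rw [coeff_C, if_neg (fun hh => hm hh.symm)]
    by_contra hc
    have hmem : m ∈ p.support := by
      simp [MvPolynomial.mem_support_iff]; exact hc
    apply hm
    ext x
    exact hs m hmem x

/-- The only ℂ-subspaces of `S` invariant under all the operators
`M_n` and `D_n` (`n ∈ I`) are `{0}` and `S` itself; i.e. `S` is an irreducible module
for the Heisenberg Lie algebra spanned by the identity, the `M_n`, and the `D_n`. -/
theorem statement4 (W : Submodule ℂ Sp)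
    (hM : ∀ k : ℕ, ∀ w ∈ W, Mop k w ∈ W)
    (hD : ∀ k : ℕ, ∀ w ∈ W, Dop k w ∈ W) :
    W = ⊥ ∨ W = ⊤ := by
  by_cases hbot : W = ⊥
  · exact Or.inl hbot
  right
  obtain ⟨p, hpW, hp0⟩ := (Submodule.ne_bot_iff W).mp hbot
  -- Step 1: (1 : Sp) ∈ W, by induction on total degree
  have key : ∀ d : ℕ, ∀ p : Sp, p ≠ 0 → p.totalDegree ≤ d → p ∈ W → (1 : Sp) ∈ W := by
    intro d
    induction d with
    | zero =>
      intro p hp0 hdeg hpW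
      have hdeg0 : p.totalDegree = 0 := Nat.le_zero.mp hdeg
      obtain ⟨c, hpc⟩ : ∃ c : ℂ, p = C c := ⟨_, eq_C_of_totalDegree_zero hdeg0⟩
      have hc0 : c ≠ 0 := by
        intro h; apply hp0; rw [hpc, h, map_zero]
      have : c⁻¹ • p ∈ W := W.smul_mem _ hpW
      have heq : c⁻¹ • p = (1 : Sp) := by
        rw [hpc, smul_eq_C_mul, ← map_mul, inv_mul_cancel₀ hc0, map_one]
      rwa [heq] at this
    | succ d ih =>
      intro p hp0 hdeg hpW
      by_cases hdeg0 : p.totalDegree = 0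
      · -- same constant argument
        obtain ⟨c, hpc⟩ : ∃ c : ℂ, p = C c := ⟨_, eq_C_of_totalDegree_zero hdeg0⟩
        have hc0 : c ≠ 0 := by
          intro h; apply hp0; rw [hpc, h, map_zero]
        have : c⁻¹ • p ∈ W := W.smul_mem _ hpW
        have heq : c⁻¹ • p = (1 : Sp) := by
          rw [hpc, smul_eq_C_mul, ← map_mul, inv_mul_cancel₀ hc0, map_one]
        rwa [heq] at this
      · -- find a variable with nonzero derivative
        have : ¬ (∀ (m : ℕ →₀ ℕ) (_ : m ∈ p.support) (x : ℕ), m x = 0) := by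
          intro h; exact hdeg0 ((totalDegree_eq_zero_iff ℕ p).mpr h)
        push_neg at this
        obtain ⟨m, hmP, i, hmi⟩ := this
        have hmi1 : 1 ≤ m i := Nat.one_le_iff_ne_zero.mpr hmi
        -- pderiv i p ≠ 0
        have hcoeffm : coeff m p ≠ 0 := MvPolynomial.mem_support_iff.mp hmP
        have hcancel : (m - Finsupp.single i 1) + Finsupp.single i 1 = m := by
          ext j
          by_cases hj : j = i
          · subst hj; simp; omega
          · simp [Finsupp.single_apply, Ne.symm hj]
        have hsub : ((m - Finsupp.single i 1 : ℕ →₀ ℕ)) i = m i - 1 := by simp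
        have hcoeffD : coeff (m - Finsupp.single i 1) (pderiv i p) ≠ 0 := by
          rw [coeff_pderiv_aux, hcancel, hsub, Nat.cast_sub hmi1]
          have hval : ((m i : ℂ) - (1 : ℕ)) + 1 = (m i : ℂ) := by push_cast; ring
          rw [hval]
          exact mul_ne_zero (Nat.cast_ne_zero.mpr hmi) hcoeffm
        have hne : pderiv i p ≠ 0 := by
          intro h; apply hcoeffD; rw [h]; simp
        -- degree bound: totalDegree (pderiv i p) ≤ d
        have hdegD : (pderiv i p).totalDegree ≤ d := by
          apply Finset.sup_le
          intro u hu
          have hcu : coeff u (pderiv i p) ≠ 0 := MvPolynomial.mem_support_iff.mp hu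
          rw [coeff_pderiv_aux] at hcu
          have hcu' : coeff (u + Finsupp.single i 1) p ≠ 0 := by
            intro h; apply hcu; rw [h, mul_zero]
          have hmem : (u + Finsupp.single i 1) ∈ p.support :=
            MvPolynomial.mem_support_iff.mpr hcu'
          have hle := MvPolynomial.le_totalDegree hmem
          have hsum : ((u + Finsupp.single i 1).sum fun _ e => e)
              = (u.sum fun _ e => e) + 1 := by
            rw [Finsupp.sum_add_index (by intros; rfl) (by intros; rfl)]
            simp [Finsupp.sum_single_index]
          rw [hsum] at hle
          omega
        exact ih (pderiv i p) hne hdegD (hD i p hpW)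
  have h1W : (1 : Sp) ∈ W := key p.totalDegree p hp0 le_rfl hpW
  -- Step 2: W = ⊤
  rw [eq_top_iff]
  suffices h : ∀ q : Sp, q ∈ W by intro q _; exact h q
  intro q
  induction q using MvPolynomial.induction_on with
  | C a =>
    have : (a : ℂ) • (1 : Sp) ∈ W := W.smul_mem a h1W
    rwa [smul_eq_C_mul, mul_one] at this
  | add f g hf hg => exact W.add_mem hf hg
  | mul_X f n hf =>
    have := hM n f hf
    simpa [Mop, LinearMap.mulLeft_apply, mul_comm] using this

end
end

section
/- First Rogers–Ramanujan identity (generating-function form, coefficientwise): for every natural number N, the coefficient of q^N in the formal power series ∏_{1 ≤ m ≤ N, m ≡ 1 or 4 (mod 5)} (1 − q^m)^{−1} ∈ ℤ⟦q⟧ equals Σ_{n ≥ 0, n² ≤ N} (coefficient of q^N in q^{n²} · ∏_{i=1}^{n} (1 − q^i)^{−1}). -/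
open PowerSeries Finset

namespace RR

abbrev R := PowerSeries ℤ

/-- truncated equality: coefficients agree up to degree `T`. -/
def Cong (T : ℕ) (A B : R) : Prop := ∀ k ≤ T, coeff (R := ℤ) k A = coeff (R := ℤ) k B

lemma Cong.refl {T A} : Cong T A A := fun _ _ => rfl
lemma Cong.symm {T A B} (h : Cong T A B) : Cong T B A := fun k hk => (h k hk).symm
lemma Cong.trans {T A B C} (h : Cong T A B) (h' : Cong T B C) : Cong T A C :=
  fun k hk => (h k hk).trans (h' k hk)
lemma Cong.add {T A B C D} (h : Cong T A B) (h' : Cong T C D) : Cong T (A + C) (B + D) := by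
  intro k hk; simp [map_add, h k hk, h' k hk]
lemma Cong.mul {T A B C D} (h : Cong T A B) (h' : Cong T C D) : Cong T (A * C) (B * D) := by
  intro k hk
  rw [coeff_mul, coeff_mul]
  refine Finset.sum_congr rfl fun p hp => ?_
  rw [Finset.HasAntidiagonal.mem_antidiagonal] at hp
  have h1 : p.1 ≤ T := le_trans (le_trans (Nat.le.intro hp) hk) (le_refl _)
  have h2 : p.2 ≤ T := by omega
  rw [h p.1 h1, h' p.2 h2]
lemma Cong.mono {T T' A B} (h : Cong T A B) (hT : T' ≤ T) : Cong T' A B :=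
  fun k hk => h k (le_trans hk hT)
lemma Cong.Xpow_mul {T e A B} (h : Cong (T - e) A B) (he : e ≤ T) :
    Cong T ((X:R)^e * A) ((X:R)^e * B) := by
  intro k hk
  rw [coeff_X_pow_mul', coeff_X_pow_mul']
  split_ifs with hke
  · rw [h (k - e) (by omega)]
  · rfl
lemma Cong.Xpow_mul_zero {T e : ℕ} (A : R) (he : T < e) : Cong T ((X:R)^e * A) 0 := by
  intro k hk
  rw [coeff_X_pow_mul']
  simp only [map_zero]
  rw [if_neg (by omega)]
lemma Cong.sum {T : ℕ} {ι : Type*} {s : Finset ι} {f g : ι → R} (h : ∀ i ∈ s, Cong T (f i) (g i)) :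
    Cong T (∑ i ∈ s, f i) (∑ i ∈ s, g i) := by
  intro k hk
  rw [map_sum, map_sum]
  exact Finset.sum_congr rfl fun i hi => h i hi k hk

/-- cancel a unit `U` (with two-sided inverse `V`). -/
lemma Cong.cancel {T : ℕ} {A B U V : R} (hUV : U * V = 1) (h : Cong T (U * A) (U * B)) :
    Cong T A B := by
  have := (h.mul (Cong.refl (A := V)))
  have e : ∀ C : R, U * C * V = C := by
    intro C; rw [mul_comm U C, mul_assoc, hUV, mul_one]
  rwa [e, e] at this

/-- canonical inverse of `1 - X^m`. -/
def Finv (m : ℕ) : R := PowerSeries.mk fun k => if m ∣ k then 1 else 0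

lemma Finv_inv {m : ℕ} (hm : 1 ≤ m) : (1 - (X:R)^m) * Finv m = 1 := by
  ext k
  rw [sub_mul, one_mul, map_sub]
  rw [coeff_X_pow_mul']
  simp only [Finv, coeff_mk, coeff_one]
  by_cases hk : k = 0
  · subst hk
    have hne : ¬ m ≤ 0 := by omega
    simp [hne]
  · rw [if_neg hk]
    by_cases hmk : m ≤ k
    · rw [if_pos hmk]
      have : m ∣ k ↔ m ∣ (k - m) := by
        constructor
        · intro h; exact (Nat.dvd_sub h dvd_rfl)
        · intro h; have := Nat.dvd_add h (dvd_refl m); rwa [Nat.sub_add_cancel hmk] at this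
      by_cases hd : m ∣ k
      · rw [if_pos hd, if_pos (this.mp hd), sub_self]
      · rw [if_neg hd, if_neg (fun hc => hd (this.mpr hc)), sub_self]
    · rw [if_neg hmk]
      rw [if_neg (fun hd : m ∣ k => hmk (Nat.le_of_dvd (Nat.pos_of_ne_zero hk) hd)), sub_zero]

lemma inv_eq_Finv {m : ℕ} (hm : 1 ≤ m) {v : R} (hv : (1 - (X:R)^m) * v = 1) :
    v = Finv m := by
  have h2 := Finv_inv (m := m) hm
  calc v = ((1 - (X:R)^m) * Finv m) * v := by rw [h2, one_mul]
    _ = ((1 - (X:R)^m) * v) * Finv m := by ring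
    _ = Finv m := by rw [hv, one_mul]

lemma Cong.Finv_one {T m : ℕ} (hm : T < m) : Cong T (Finv m) 1 := by
  intro k hk
  simp only [Finv, coeff_mk, coeff_one]
  by_cases hk0 : k = 0
  · subst hk0; simp
  · rw [if_neg hk0, if_neg (fun hd : m ∣ k => hk0 (by
      rcases Nat.eq_zero_or_pos k with h | h
      · exact h
      · exact absurd (Nat.le_of_dvd h hd) (by omega)))]

lemma Cong.one_sub_Xpow_one {T e : ℕ} (he : T < e) : Cong T (1 - (X:R)^e) 1 := by
  intro k hk
  rw [map_sub, coeff_X_pow]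
  rw [if_neg (by omega), sub_zero]

/-- Gaussian binomial coefficient in variable `X^d`. -/
noncomputable def Bq (d : ℕ) : ℕ → ℕ → R
  | 0, 0 => 1
  | 0, _+1 => 0
  | _+1, 0 => 1
  | n+1, k+1 => Bq d n (k+1) + (X:R)^(d*(n-k)) * Bq d n k

@[simp] lemma Bq_zero_right (d n : ℕ) : Bq d n 0 = 1 := by cases n <;> rfl

lemma Bq_succ_succ (d n k : ℕ) :
    Bq d (n+1) (k+1) = Bq d n (k+1) + (X:R)^(d*(n-k)) * Bq d n k := rfl

lemma Bq_eq_zero (d : ℕ) {n k : ℕ} (h : n < k) : Bq d n k = 0 := by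
  induction n generalizing k with
  | zero => cases k with
    | zero => omega
    | succ k => rfl
  | succ n ih =>
    cases k with
    | zero => omega
    | succ k =>
      rw [Bq_succ_succ, ih (by omega), ih (by omega), mul_zero, add_zero]

@[simp] lemma Bq_self (d n : ℕ) : Bq d n n = 1 := by
  induction n with
  | zero => rfl
  | succ n ih => rw [Bq_succ_succ, Bq_eq_zero d (by omega), zero_add, Nat.sub_self,
      mul_zero, pow_zero, one_mul, ih]

/-- second Pascal rule -/
lemma Bq_pascal2 (d n k : ℕ) :
    Bq d (n+1) (k+1) = (X:R)^(d*(k+1)) * Bq d n (k+1) + Bq d n k := by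
  induction n generalizing k with
  | zero =>
    cases k with
    | zero => rw [Bq_succ_succ]; simp [Bq_eq_zero d (by omega : (0:ℕ) < 1)]
    | succ k => rw [Bq_eq_zero d (by omega), Bq_eq_zero d (by omega),
        Bq_eq_zero d (by omega)]; ring
  | succ n ih =>
    rcases lt_trichotomy k (n+1) with hk | hk | hk
    · -- k ≤ n
      have hk' : k ≤ n := by omega
      rw [Bq_succ_succ d (n+1) k]
      cases k with
      | zero =>
        simp only [Bq_zero_right, mul_one, Nat.sub_zero]
        conv_lhs => rw [ih 0]
        conv_rhs => rw [Bq_succ_succ d n 0]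
        simp only [Bq_zero_right, mul_one, Nat.sub_zero]
        rw [show d*(n+1) = d*n + d*1 by ring, pow_add]
        ring
      | succ k =>
        have hs : n - k = (n - (k+1)) + 1 := by omega
        have hs2 : n + 1 - (k+1) = (n - (k+1)) + 1 := by omega
        conv_lhs => rw [ih (k+1), ih k]
        conv_rhs => rw [Bq_succ_succ d n (k+1), Bq_succ_succ d n k]
        rw [hs, hs2, show d*((n-(k+1))+1) = d*(n-(k+1)) + d*1 by ring,
          show d*(k+1+1) = d*(k+1) + d*1 by ring, pow_add, pow_add]
        ring
    · subst hk
      rw [Bq_self, Bq_eq_zero d (by omega), Bq_self]; ring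
    · rw [Bq_eq_zero d (by omega), Bq_eq_zero d (by omega), Bq_eq_zero d (by omega)]; ring
/-- `X` to an integer power, clipped at 0. -/
noncomputable def Xz (c : ℤ) : R := (X:R)^(c.toNat)
lemma Xz_natCast (k : ℕ) : Xz (k:ℤ) = (X:R)^k := by simp [Xz]
/-- Gaussian binomial with integer index (0 outside range). -/
noncomputable def BZ (d n : ℕ) (a : ℤ) : R := if 0 ≤ a then Bq d n a.toNat else 0
lemma BZ_of_neg {d n : ℕ} {a : ℤ} (h : a < 0) : BZ d n a = 0 := by
  simp [BZ, not_le.mpr h]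
lemma BZ_of_gt {d n : ℕ} {a : ℤ} (h : (n:ℤ) < a) : BZ d n a = 0 := by
  rw [BZ, if_pos (by omega)]
  exact Bq_eq_zero d (by omega)
lemma BZ_natCast (d n k : ℕ) : BZ d n (k:ℤ) = Bq d n k := by simp [BZ]
@[simp] lemma BZ_zero_right (d n : ℕ) : BZ d n 0 = 1 := by simp [BZ]

lemma BZ_pascal1 (d n : ℕ) (a : ℤ) :
    BZ d (n+1) a = BZ d n a + Xz (d*((n:ℤ)+1-a)) * BZ d n (a-1) := by
  rcases lt_trichotomy a 0 with h | h | h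
  · rw [BZ_of_neg h, BZ_of_neg h, BZ_of_neg (by omega), mul_zero, add_zero]
  · subst h
    rw [show (0:ℤ)-1 = -1 by ring, BZ_of_neg (by omega : (-1:ℤ) < 0), mul_zero, add_zero,
      BZ_zero_right, BZ_zero_right]
  · by_cases hn : a ≤ (n:ℤ) + 1
    · obtain ⟨k, rfl⟩ : ∃ k : ℕ, a = (k:ℤ)+1 := ⟨(a-1).toNat, by omega⟩
      have h1 : ((k:ℤ)+1) = ((k+1:ℕ):ℤ) := by push_cast; ring
      have h2 : ((k:ℤ)+1)-1 = ((k:ℕ):ℤ) := by push_cast; ring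
      have hkn2 : k ≤ n := by omega
      have hx : Xz ((d:ℤ) * ((n:ℤ)+1-((k+1:ℕ):ℤ))) = (X:R)^(d*(n-k)) := by
        rw [show (d:ℤ) * ((n:ℤ)+1-((k+1:ℕ):ℤ)) = ((d*(n-k) : ℕ) : ℤ) by
          rw [Nat.cast_mul, Nat.cast_sub hkn2]; push_cast; ring, Xz_natCast]
      rw [h2, h1, BZ_natCast, BZ_natCast, BZ_natCast, Bq_succ_succ, hx]
    · rw [BZ_of_gt (by omega), BZ_of_gt (by omega), BZ_of_gt (by omega), mul_zero, add_zero]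

lemma BZ_pascal2 (d n : ℕ) (a : ℤ) :
    BZ d (n+1) a = Xz (d*a) * BZ d n a + BZ d n (a-1) := by
  rcases lt_trichotomy a 0 with h | h | h
  · rw [BZ_of_neg h, BZ_of_neg h, BZ_of_neg (by omega), mul_zero, zero_add]
  · subst h
    rw [show (0:ℤ)-1 = -1 by ring, BZ_of_neg (by omega : (-1:ℤ) < 0), add_zero,
      BZ_zero_right, BZ_zero_right, mul_zero,
      show Xz 0 = 1 by rw [show (0:ℤ)=((0:ℕ):ℤ) from rfl, Xz_natCast, pow_zero], one_mul]
  · obtain ⟨k, rfl⟩ : ∃ k : ℕ, a = (k:ℤ)+1 := ⟨(a-1).toNat, by omega⟩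
    have h1 : ((k:ℤ)+1) = ((k+1:ℕ):ℤ) := by push_cast; ring
    have h2 : ((k:ℤ)+1)-1 = ((k:ℕ):ℤ) := by push_cast; ring
    have hx : Xz ((d:ℤ) * ((k+1:ℕ):ℤ)) = (X:R)^(d*(k+1)) := by
      rw [show (d:ℤ) * ((k+1:ℕ):ℤ) = ((d*(k+1) : ℕ) : ℤ) by push_cast; ring, Xz_natCast]
    rw [h2, h1, BZ_natCast, BZ_natCast, BZ_natCast, Bq_pascal2, hx]

/-- `(X^d; X^d)_n` Pochhammer product. -/
noncomputable def Poch (d n : ℕ) : R := ∏ i ∈ Icc 1 n, (1 - (X:R)^(d*i))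
@[simp] lemma Poch_zero (d : ℕ) : Poch d 0 = 1 := by simp [Poch]
lemma Poch_succ (d n : ℕ) : Poch d (n+1) = Poch d n * (1 - (X:R)^(d*(n+1))) := by
  rw [Poch, Poch, ← Finset.prod_Icc_succ_top (by omega : 1 ≤ n+1)]

lemma Bq_fact (d : ℕ) : ∀ n k, k ≤ n → Poch d k * Poch d (n-k) * Bq d n k = Poch d n := by
  intro n
  induction n with
  | zero => intro k hk; interval_cases k; simp
  | succ n ih =>
    intro k hk
    rcases Nat.eq_or_lt_of_le hk with h | h
    · subst h; simp
    have hkn : k ≤ n := by omega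
    cases k with
    | zero => simp
    | succ k =>
      have hrw : n + 1 - (k+1) = (n - (k+1)) + 1 := by omega
      have hnk : n - k = (n - (k+1)) + 1 := by omega
      have e3 : (X:R)^(d*(n-(k+1)+1)) * (X:R)^(d*(k+1)) = (X:R)^(d*(n+1)) := by
        rw [← pow_add]
        congr 1
        have h4 : n - (k+1) + 1 + (k+1) = n + 1 := by omega
        calc d*(n-(k+1)+1) + d*(k+1) = d*((n-(k+1)+1) + (k+1)) := by ring
          _ = d*(n+1) := by rw [h4]
      have e1 : Poch d (k+1) * (Poch d (n-(k+1)) * (1 - X^(d*(n-(k+1)+1)))) * Bq d n (k+1)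
          = (1 - X^(d*(n-(k+1)+1))) * Poch d n := by
        rw [← ih (k+1) hkn]; ring
      have e2 : Poch d (k+1) * (Poch d (n-(k+1)) * (1 - X^(d*(n-(k+1)+1)))) *
            ((X:R)^(d*(n-(k+1)+1)) * Bq d n k)
          = (X:R)^(d*(n-(k+1)+1)) * (1 - X^(d*(k+1))) * Poch d n := by
        rw [← ih k (by omega), hnk, Poch_succ d (n-(k+1)), Poch_succ d k]
        ring
      calc Poch d (k+1) * Poch d (n+1-(k+1)) * Bq d (n+1) (k+1)
          = Poch d (k+1) * (Poch d (n-(k+1)) * (1 - X^(d*(n-(k+1)+1)))) * Bq d n (k+1)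
            + Poch d (k+1) * (Poch d (n-(k+1)) * (1 - X^(d*(n-(k+1)+1)))) *
              ((X:R)^(d*(n-(k+1)+1)) * Bq d n k) := by
            rw [hrw, Poch_succ d (n-(k+1)), Bq_succ_succ, ← hnk]; ring
        _ = (1 - X^(d*(n-(k+1)+1))) * Poch d n
            + (X:R)^(d*(n-(k+1)+1)) * (1 - X^(d*(k+1))) * Poch d n := by rw [e1, e2]
        _ = Poch d n * (1 - (X:R)^(d*(n+1))) := by rw [← e3]; ring
        _ = Poch d (n+1) := (Poch_succ d n).symm
lemma Bq_zero_right' (d n : ℕ) : Bq d n 0 = 1 := Bq_zero_right d n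

/-! ### exponents of the theta series -/
noncomputable def eEv (i : ℤ) : ℕ := (i*(10*i+1)).toNat
noncomputable def eOd (i : ℤ) : ℕ := ((2*i+1)*(5*i+3)).toNat
lemma eEv_cast (i : ℤ) : ((eEv i : ℕ) : ℤ) = i*(10*i+1) := by
  rw [eEv, Int.toNat_of_nonneg]
  rcases le_or_gt 0 i with h | h
  · exact mul_nonneg h (by omega)
  · nlinarith
lemma eOd_cast (i : ℤ) : ((eOd i : ℕ) : ℤ) = (2*i+1)*(5*i+3) := by
  rw [eOd, Int.toNat_of_nonneg]
  rcases le_or_gt 0 i with h | h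
  · exact mul_nonneg (by omega) (by omega)
  · nlinarith

/-! ### the Schur sum -/
noncomputable def sTermE (n : ℕ) (i : ℤ) : R := (X:R)^(eEv i) * BZ 1 n (((n/2 : ℕ) : ℤ) - 5*i)
noncomputable def sTermO (n : ℕ) (i : ℤ) : R :=
  (X:R)^(eOd i) * BZ 1 n ((((n+1)/2 : ℕ) : ℤ) - 3 - 5*i)
noncomputable def Sch (n : ℕ) : R :=
  ∑ i ∈ Icc (-(n:ℤ)-1) ((n:ℤ)+1), (sTermE n i - sTermO n i)

lemma sTermE_vanish {n : ℕ} {i : ℤ} (h : i < -(n:ℤ)-1 ∨ (n:ℤ)+1 < i) : sTermE n i = 0 := by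
  have hd : n/2 ≤ n := Nat.div_le_self n 2
  rcases h with h | h
  · rw [sTermE, BZ_of_gt (by omega), mul_zero]
  · rw [sTermE, BZ_of_neg (by omega), mul_zero]
lemma sTermO_vanish {n : ℕ} {i : ℤ} (h : i < -(n:ℤ)-1 ∨ (n:ℤ)+1 < i) : sTermO n i = 0 := by
  have hd : (n+1)/2 ≤ n + 1 := Nat.div_le_self _ 2
  rcases h with h | h
  · rw [sTermO, BZ_of_gt (by omega), mul_zero]
  · rw [sTermO, BZ_of_neg (by omega), mul_zero]

lemma Sch_ext (n : ℕ) {K : ℤ} (hK : (n:ℤ)+1 ≤ K) :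
    Sch n = ∑ i ∈ Icc (-K) K, (sTermE n i - sTermO n i) := by
  refine Finset.sum_subset (Finset.Icc_subset_Icc (by omega) (by omega)) ?_
  intro x hx hnx
  simp only [Finset.mem_Icc] at hx hnx
  have h : x < -(n:ℤ)-1 ∨ (n:ℤ)+1 < x := by omega
  rw [sTermE_vanish h, sTermO_vanish h, sub_zero]

lemma sum_shift_cancel {K : ℤ} (f : ℤ → R) (h1 : f (K+1) = 0) (h2 : f (-K) = 0) :
    ∑ i ∈ Icc (-K) K, f (i+1) = ∑ i ∈ Icc (-K) K, f i := by
  have e1 : ∑ i ∈ Icc (-K) K, f (i+1) = ∑ j ∈ Icc (-K+1) (K+1), f j := by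
    rw [← Finset.map_add_right_Icc, Finset.sum_map]; rfl
  have e2 : ∑ j ∈ Icc (-K+1) (K+1), f j = ∑ j ∈ Icc (-K) (K+1), f j := by
    refine Finset.sum_subset (Finset.Icc_subset_Icc (by omega) le_rfl) ?_
    intro x hx hnx
    simp only [Finset.mem_Icc] at hx hnx
    have : x = -K := by omega
    rw [this]; exact h2
  have e3 : ∑ j ∈ Icc (-K) K, f j = ∑ j ∈ Icc (-K) (K+1), f j := by
    refine Finset.sum_subset (Finset.Icc_subset_Icc le_rfl (by omega)) ?_
    intro x hx hnx
    simp only [Finset.mem_Icc] at hx hnx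
    have : x = K+1 := by omega
    rw [this]; exact h1
  rw [e1, e2, ← e3]

/-! ### unfolded term forms -/
lemma sTermE_unfold {n : ℕ} {c : ℤ} (hh : ((n/2:ℕ):ℤ) = c) (i : ℤ) :
    sTermE n i = (X:R)^(eEv i) * BZ 1 n (c - 5*i) := by rw [sTermE, hh]
lemma sTermO_unfold {n : ℕ} {c : ℤ} (hh : (((n+1)/2:ℕ):ℤ) = c) (i : ℤ) :
    sTermO n i = (X:R)^(eOd i) * BZ 1 n (c - 3 - 5*i) := by rw [sTermO, hh]

/-! ### Xz combination -/
lemma Xz_mul_Xz_of (a b : ℤ) (c : ℕ) (ha : 0 ≤ a) (hb : 0 ≤ b) (hc : a + b = (c:ℤ)) :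
    Xz a * Xz b = (X:R)^c := by
  rw [Xz, Xz, ← pow_add]
  congr 1
  omega
/-! ### even case of the Schur recurrence -/
noncomputable def T1ev (p : ℕ) (i : ℤ) : R :=
  (X:R)^(eEv i) * Xz ((p:ℤ)+1-5*i) * BZ 1 (2*p) ((p:ℤ)+1-5*i)

lemma even_key (p : ℕ) (i : ℤ) :
    sTermE (2*p+2) i - sTermO (2*p+2) i =
    ((sTermE (2*p+1) i - sTermO (2*p+1) i)
      + (X:R)^(2*p+1) * (sTermE (2*p) i - sTermO (2*p) i))
    + (T1ev p i - T1ev p (i+1)) := by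
  rw [sTermE_unfold (show (((2*p+2)/2:ℕ):ℤ) = (p:ℤ)+1 by omega),
      sTermE_unfold (show (((2*p+1)/2:ℕ):ℤ) = (p:ℤ) by omega),
      sTermE_unfold (show (((2*p)/2:ℕ):ℤ) = (p:ℤ) by omega),
      sTermO_unfold (show (((2*p+2+1)/2:ℕ):ℤ) = (p:ℤ)+1 by omega),
      sTermO_unfold (show (((2*p+1+1)/2:ℕ):ℤ) = (p:ℤ)+1 by omega),
      sTermO_unfold (show (((2*p+1)/2:ℕ):ℤ) = (p:ℤ) by omega)]
  have h1 : BZ 1 (2*p+2) ((p:ℤ)+1-5*i)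
      = Xz ((p:ℤ)+1-5*i) * BZ 1 (2*p+1) ((p:ℤ)+1-5*i) + BZ 1 (2*p+1) ((p:ℤ)-5*i) := by
    have h := BZ_pascal2 1 (2*p+1) ((p:ℤ)+1-5*i)
    rw [show ((1:ℕ):ℤ) * ((p:ℤ)+1-5*i) = (p:ℤ)+1-5*i by push_cast; ring,
        show ((p:ℤ)+1-5*i) - 1 = (p:ℤ)-5*i by ring] at h
    exact h
  rw [show (p:ℤ)+1-3-5*i = (p:ℤ)-2-5*i by ring]
  have h2 : BZ 1 (2*p+2) ((p:ℤ)-2-5*i)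
      = BZ 1 (2*p+1) ((p:ℤ)-2-5*i) + Xz ((p:ℤ)+4+5*i) * BZ 1 (2*p+1) ((p:ℤ)-3-5*i) := by
    have h := BZ_pascal1 1 (2*p+1) ((p:ℤ)-2-5*i)
    rw [show ((1:ℕ):ℤ) * (((2*p+1:ℕ):ℤ)+1-((p:ℤ)-2-5*i)) = (p:ℤ)+4+5*i by push_cast; ring,
        show ((p:ℤ)-2-5*i) - 1 = (p:ℤ)-3-5*i by ring] at h
    exact h
  have h3 : BZ 1 (2*p+1) ((p:ℤ)+1-5*i)
      = BZ 1 (2*p) ((p:ℤ)+1-5*i) + Xz ((p:ℤ)+5*i) * BZ 1 (2*p) ((p:ℤ)-5*i) := by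
    have h := BZ_pascal1 1 (2*p) ((p:ℤ)+1-5*i)
    rw [show ((1:ℕ):ℤ) * (((2*p:ℕ):ℤ)+1-((p:ℤ)+1-5*i)) = (p:ℤ)+5*i by push_cast; ring,
        show ((p:ℤ)+1-5*i) - 1 = (p:ℤ)-5*i by ring] at h
    exact h
  have h4 : BZ 1 (2*p+1) ((p:ℤ)-3-5*i)
      = Xz ((p:ℤ)-3-5*i) * BZ 1 (2*p) ((p:ℤ)-3-5*i) + BZ 1 (2*p) ((p:ℤ)-4-5*i) := by
    have h := BZ_pascal2 1 (2*p) ((p:ℤ)-3-5*i)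
    rw [show ((1:ℕ):ℤ) * ((p:ℤ)-3-5*i) = (p:ℤ)-3-5*i by push_cast; ring,
        show ((p:ℤ)-3-5*i) - 1 = (p:ℤ)-4-5*i by ring] at h
    exact h
  have c1 : Xz ((p:ℤ)+1-5*i) * (Xz ((p:ℤ)+5*i) * BZ 1 (2*p) ((p:ℤ)-5*i))
      = (X:R)^(2*p+1) * BZ 1 (2*p) ((p:ℤ)-5*i) := by
    rcases lt_or_ge ((p:ℤ)-5*i) 0 with h | h
    · rw [BZ_of_neg h, mul_zero, mul_zero, mul_zero]
    rcases lt_or_ge ((2*p:ℕ):ℤ) ((p:ℤ)-5*i) with h' | h'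
    · rw [BZ_of_gt h', mul_zero, mul_zero, mul_zero]
    rw [← mul_assoc, Xz_mul_Xz_of _ _ (2*p+1) (by push_cast at h' ⊢; omega) (by push_cast at h' ⊢; omega)
      (by push_cast; ring)]
  have c2 : Xz ((p:ℤ)+4+5*i) * (Xz ((p:ℤ)-3-5*i) * BZ 1 (2*p) ((p:ℤ)-3-5*i))
      = (X:R)^(2*p+1) * BZ 1 (2*p) ((p:ℤ)-3-5*i) := by
    rcases lt_or_ge ((p:ℤ)-3-5*i) 0 with h | h
    · rw [BZ_of_neg h, mul_zero, mul_zero, mul_zero]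
    rcases lt_or_ge ((2*p:ℕ):ℤ) ((p:ℤ)-3-5*i) with h' | h'
    · rw [BZ_of_gt h', mul_zero, mul_zero, mul_zero]
    rw [← mul_assoc, Xz_mul_Xz_of _ _ (2*p+1) (by push_cast at h' ⊢; omega) h
      (by push_cast; ring)]
  have c3 : (X:R)^(eOd i) * (Xz ((p:ℤ)+4+5*i) * BZ 1 (2*p) ((p:ℤ)-4-5*i)) = T1ev p (i+1) := by
    rw [T1ev, show (p:ℤ)+1-5*(i+1) = (p:ℤ)-4-5*i by ring]
    rcases lt_or_ge ((p:ℤ)-4-5*i) 0 with h | h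
    · rw [BZ_of_neg h, mul_zero, mul_zero, mul_zero]
    rcases lt_or_ge ((2*p:ℕ):ℤ) ((p:ℤ)-4-5*i) with h' | h'
    · rw [BZ_of_gt h', mul_zero, mul_zero, mul_zero]
    have key : ((eOd i : ℕ) : ℤ) + ((p:ℤ)+4+5*i) = ((eEv (i+1) : ℕ) : ℤ) + ((p:ℤ)-4-5*i) := by
      rw [eOd_cast, eEv_cast]; ring
    have hnn : (0:ℤ) ≤ (p:ℤ)+4+5*i := by push_cast at h'; omega
    have hnn2 : (0:ℤ) ≤ (p:ℤ)-4-5*i := h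
    have hkey : eOd i + ((p:ℤ)+4+5*i).toNat = eEv (i+1) + ((p:ℤ)-4-5*i).toNat := by omega
    simp only [Xz]
    rw [← mul_assoc, ← pow_add, ← pow_add, hkey]
  rw [h1, h2, h3, h4, T1ev]
  linear_combination (X:R)^(eEv i) * c1 - (X:R)^(eOd i) * c2 - c3

theorem Sch_rec_even (p : ℕ) : Sch (2*p+2) = Sch (2*p+1) + (X:R)^(2*p+1) * Sch (2*p) := by
  have hK2 : ((2*p+2:ℕ):ℤ)+1 ≤ 2*(p:ℤ)+3 := by push_cast; omega
  have hK1 : ((2*p+1:ℕ):ℤ)+1 ≤ 2*(p:ℤ)+3 := by push_cast; omega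
  have hK0 : ((2*p:ℕ):ℤ)+1 ≤ 2*(p:ℤ)+3 := by push_cast; omega
  rw [Sch_ext (2*p+2) hK2, Sch_ext (2*p+1) hK1, Sch_ext (2*p) hK0,
    Finset.mul_sum, ← Finset.sum_add_distrib]
  have tele : ∑ i ∈ Icc (-(2*(p:ℤ)+3)) (2*(p:ℤ)+3), (T1ev p i - T1ev p (i+1)) = 0 := by
    rw [Finset.sum_sub_distrib]
    rw [sum_shift_cancel (T1ev p) ?_ ?_, sub_self]
    · rw [T1ev, BZ_of_neg (by omega), mul_zero]
    · rw [T1ev, BZ_of_gt (by push_cast; omega), mul_zero]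
  calc ∑ i ∈ Icc (-(2*(p:ℤ)+3)) (2*(p:ℤ)+3), (sTermE (2*p+2) i - sTermO (2*p+2) i)
      = ∑ i ∈ Icc (-(2*(p:ℤ)+3)) (2*(p:ℤ)+3),
          (((sTermE (2*p+1) i - sTermO (2*p+1) i)
            + (X:R)^(2*p+1) * (sTermE (2*p) i - sTermO (2*p) i))
           + (T1ev p i - T1ev p (i+1))) :=
        Finset.sum_congr rfl fun i _ => even_key p i
    _ = _ := by rw [Finset.sum_add_distrib, tele, add_zero]
lemma odd_key (p : ℕ) (i : ℤ) :
    sTermE (2*p+3) i - sTermO (2*p+3) i =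
    (sTermE (2*p+2) i - sTermO (2*p+2) i)
      + (X:R)^(2*p+2) * (sTermE (2*p+1) i - sTermO (2*p+1) i) := by
  rw [sTermE_unfold (show (((2*p+3)/2:ℕ):ℤ) = (p:ℤ)+1 by omega),
      sTermE_unfold (show (((2*p+2)/2:ℕ):ℤ) = (p:ℤ)+1 by omega),
      sTermE_unfold (show (((2*p+1)/2:ℕ):ℤ) = (p:ℤ) by omega),
      sTermO_unfold (show (((2*p+3+1)/2:ℕ):ℤ) = (p:ℤ)+2 by omega),
      sTermO_unfold (show (((2*p+2+1)/2:ℕ):ℤ) = (p:ℤ)+1 by omega),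
      sTermO_unfold (show (((2*p+1+1)/2:ℕ):ℤ) = (p:ℤ)+1 by omega)]
  rw [show (p:ℤ)+2-3-5*i = (p:ℤ)-1-5*i by ring,
      show (p:ℤ)+1-3-5*i = (p:ℤ)-2-5*i by ring]
  have h1 : BZ 1 (2*p+3) ((p:ℤ)+1-5*i)
      = BZ 1 (2*p+2) ((p:ℤ)+1-5*i) + Xz ((p:ℤ)+2+5*i) * BZ 1 (2*p+2) ((p:ℤ)-5*i) := by
    have h := BZ_pascal1 1 (2*p+2) ((p:ℤ)+1-5*i)
    rw [show ((1:ℕ):ℤ) * (((2*p+2:ℕ):ℤ)+1-((p:ℤ)+1-5*i)) = (p:ℤ)+2+5*i by push_cast; ring,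
        show ((p:ℤ)+1-5*i) - 1 = (p:ℤ)-5*i by ring] at h
    exact h
  have h2 : BZ 1 (2*p+3) ((p:ℤ)-1-5*i)
      = Xz ((p:ℤ)-1-5*i) * BZ 1 (2*p+2) ((p:ℤ)-1-5*i) + BZ 1 (2*p+2) ((p:ℤ)-2-5*i) := by
    have h := BZ_pascal2 1 (2*p+2) ((p:ℤ)-1-5*i)
    rw [show ((1:ℕ):ℤ) * ((p:ℤ)-1-5*i) = (p:ℤ)-1-5*i by push_cast; ring,
        show ((p:ℤ)-1-5*i) - 1 = (p:ℤ)-2-5*i by ring] at h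
    exact h
  have h3 : BZ 1 (2*p+2) ((p:ℤ)-5*i)
      = Xz ((p:ℤ)-5*i) * BZ 1 (2*p+1) ((p:ℤ)-5*i) + BZ 1 (2*p+1) ((p:ℤ)-1-5*i) := by
    have h := BZ_pascal2 1 (2*p+1) ((p:ℤ)-5*i)
    rw [show ((1:ℕ):ℤ) * ((p:ℤ)-5*i) = (p:ℤ)-5*i by push_cast; ring,
        show ((p:ℤ)-5*i) - 1 = (p:ℤ)-1-5*i by ring] at h
    exact h
  have h4 : BZ 1 (2*p+2) ((p:ℤ)-1-5*i)
      = BZ 1 (2*p+1) ((p:ℤ)-1-5*i) + Xz ((p:ℤ)+3+5*i) * BZ 1 (2*p+1) ((p:ℤ)-2-5*i) := by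
    have h := BZ_pascal1 1 (2*p+1) ((p:ℤ)-1-5*i)
    rw [show ((1:ℕ):ℤ) * (((2*p+1:ℕ):ℤ)+1-((p:ℤ)-1-5*i)) = (p:ℤ)+3+5*i by push_cast; ring,
        show ((p:ℤ)-1-5*i) - 1 = (p:ℤ)-2-5*i by ring] at h
    exact h
  have c1 : Xz ((p:ℤ)+2+5*i) * (Xz ((p:ℤ)-5*i) * BZ 1 (2*p+1) ((p:ℤ)-5*i))
      = (X:R)^(2*p+2) * BZ 1 (2*p+1) ((p:ℤ)-5*i) := by
    rcases lt_or_ge ((p:ℤ)-5*i) 0 with h | h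
    · rw [BZ_of_neg h, mul_zero, mul_zero, mul_zero]
    rcases lt_or_ge ((2*p+1:ℕ):ℤ) ((p:ℤ)-5*i) with h' | h'
    · rw [BZ_of_gt h', mul_zero, mul_zero, mul_zero]
    rw [← mul_assoc, Xz_mul_Xz_of _ _ (2*p+2) (by push_cast at h' ⊢; omega) h
      (by push_cast; ring)]
  have c2 : Xz ((p:ℤ)-1-5*i) * (Xz ((p:ℤ)+3+5*i) * BZ 1 (2*p+1) ((p:ℤ)-2-5*i))
      = (X:R)^(2*p+2) * BZ 1 (2*p+1) ((p:ℤ)-2-5*i) := by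
    rcases lt_or_ge ((p:ℤ)-2-5*i) 0 with h | h
    · rw [BZ_of_neg h, mul_zero, mul_zero, mul_zero]
    rcases lt_or_ge ((2*p+1:ℕ):ℤ) ((p:ℤ)-2-5*i) with h' | h'
    · rw [BZ_of_gt h', mul_zero, mul_zero, mul_zero]
    rw [← mul_assoc, Xz_mul_Xz_of _ _ (2*p+2) (by omega) (by push_cast at h' ⊢; omega)
      (by push_cast; ring)]
  have c3 : (X:R)^(eEv i) * (Xz ((p:ℤ)+2+5*i) * BZ 1 (2*p+1) ((p:ℤ)-1-5*i))
      = (X:R)^(eOd i) * (Xz ((p:ℤ)-1-5*i) * BZ 1 (2*p+1) ((p:ℤ)-1-5*i)) := by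
    rcases lt_or_ge ((p:ℤ)-1-5*i) 0 with h | h
    · rw [BZ_of_neg h, mul_zero, mul_zero, mul_zero, mul_zero]
    rcases lt_or_ge ((2*p+1:ℕ):ℤ) ((p:ℤ)-1-5*i) with h' | h'
    · rw [BZ_of_gt h', mul_zero, mul_zero, mul_zero, mul_zero]
    have key : ((eEv i : ℕ) : ℤ) + ((p:ℤ)+2+5*i) = ((eOd i : ℕ) : ℤ) + ((p:ℤ)-1-5*i) := by
      rw [eEv_cast, eOd_cast]; ring
    have hnn : (0:ℤ) ≤ (p:ℤ)+2+5*i := by push_cast at h'; omega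
    have hkey : eEv i + ((p:ℤ)+2+5*i).toNat = eOd i + ((p:ℤ)-1-5*i).toNat := by omega
    simp only [Xz]
    rw [← mul_assoc, ← mul_assoc, ← pow_add, ← pow_add, hkey]
  rw [h1, h2, h3, h4]
  linear_combination (X:R)^(eEv i) * c1 - (X:R)^(eOd i) * c2 + c3

theorem Sch_rec_odd (p : ℕ) : Sch (2*p+3) = Sch (2*p+2) + (X:R)^(2*p+2) * Sch (2*p+1) := by
  have hK3 : ((2*p+3:ℕ):ℤ)+1 ≤ 2*(p:ℤ)+4 := by push_cast; omega
  have hK2 : ((2*p+2:ℕ):ℤ)+1 ≤ 2*(p:ℤ)+4 := by push_cast; omega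
  have hK1 : ((2*p+1:ℕ):ℤ)+1 ≤ 2*(p:ℤ)+4 := by push_cast; omega
  rw [Sch_ext (2*p+3) hK3, Sch_ext (2*p+2) hK2, Sch_ext (2*p+1) hK1,
    Finset.mul_sum, ← Finset.sum_add_distrib]
  exact Finset.sum_congr rfl fun i _ => odd_key p i

theorem Sch_rec (n : ℕ) : Sch (n+2) = Sch (n+1) + (X:R)^(n+1) * Sch n := by
  rcases Nat.even_or_odd n with ⟨p, hp⟩ | ⟨p, hp⟩
  · have : n = 2*p := by omega
    subst this
    exact Sch_rec_even p
  · have : n = 2*p+1 := by omega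
    subst this
    exact Sch_rec_odd p
lemma Sch_zero : Sch 0 = 1 := by
  rw [Sch]
  rw [Finset.sum_eq_single_of_mem 0 (by simp)]
  · have h1 : sTermE 0 0 = 1 := by
      rw [sTermE, show ((0/2:ℕ):ℤ) - 5*0 = ((0:ℕ):ℤ) by norm_num, BZ_natCast,
        Bq_zero_right', mul_one, show eEv 0 = 0 by rw [eEv]; norm_num, pow_zero]
    have h2 : sTermO 0 0 = 0 := by
      rw [sTermO, BZ_of_neg (by norm_num), mul_zero]
    rw [h1, h2, sub_zero]
  · intro b _ hb0
    have hE : sTermE 0 b = 0 := by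
      rcases lt_or_ge b 0 with h | h
      · rw [sTermE, BZ_of_gt (by norm_num; omega), mul_zero]
      · rw [sTermE, BZ_of_neg (by norm_num; omega), mul_zero]
    have hO : sTermO 0 b = 0 := by
      rcases lt_or_ge b 0 with h | h
      · rw [sTermO, BZ_of_gt (by norm_num; omega), mul_zero]
      · rw [sTermO, BZ_of_neg (by norm_num; omega), mul_zero]
    rw [hE, hO, sub_zero]

lemma Sch_one : Sch 1 = 1 := by
  rw [Sch]
  rw [Finset.sum_eq_single_of_mem 0 (by simp)]
  · have h1 : sTermE 1 0 = 1 := by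
      rw [sTermE, show ((1/2:ℕ):ℤ) - 5*0 = ((0:ℕ):ℤ) by norm_num, BZ_natCast,
        Bq_zero_right', mul_one, show eEv 0 = 0 by rw [eEv]; norm_num, pow_zero]
    have h2 : sTermO 1 0 = 0 := by
      rw [sTermO, BZ_of_neg (by norm_num), mul_zero]
    rw [h1, h2, sub_zero]
  · intro b _ hb0
    have hE : sTermE 1 b = 0 := by
      rcases lt_or_ge b 0 with h | h
      · rw [sTermE, BZ_of_gt (by norm_num; omega), mul_zero]
      · rw [sTermE, BZ_of_neg (by norm_num; omega), mul_zero]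
    have hO : sTermO 1 b = 0 := by
      rcases lt_or_ge b 0 with h | h
      · rw [sTermO, BZ_of_gt (by norm_num; omega), mul_zero]
      · rw [sTermO, BZ_of_neg (by norm_num; omega), mul_zero]
    rw [hE, hO, sub_zero]

/-! ### the sum side -/
noncomputable def Dd (n : ℕ) : R := ∑ k ∈ Finset.range (n+1), (X:R)^(k^2) * Bq 1 (n-k) k

lemma Dd_zero : Dd 0 = 1 := by
  rw [Dd]
  norm_num
lemma Dd_one : Dd 1 = 1 := by
  rw [Dd]
  rw [Finset.sum_range_succ, Finset.sum_range_one]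
  norm_num [Bq_eq_zero 1 (by omega : 1 - 1 < 1)]

lemma Dd_key (n k : ℕ) :
    (X:R)^((k+1)^2) * Bq 1 (n+2-(k+1)) (k+1)
    = (X:R)^((k+1)^2) * Bq 1 (n+1-(k+1)) (k+1)
      + (X:R)^(n+1) * ((X:R)^(k^2) * Bq 1 (n-k) k) := by
  rcases le_or_gt k n with hkn | hkn
  · rcases le_or_gt (2*k) n with h2k | h2k
    · have h1 : n+2-(k+1) = (n-k) + 1 := by omega
      have h2 : n+1-(k+1) = n-k := by omega
      rw [h1, h2, Bq_succ_succ]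
      rw [show 1*(n-k-k) = (n-2*k) by omega]
      have hx : (X:R)^((k+1)^2) * (X:R)^(n-2*k) = (X:R)^(n+1) * (X:R)^(k^2) := by
        rw [← pow_add, ← pow_add]
        congr 1
        have hsq : (k+1)^2 = k^2+2*k+1 := by ring
        omega
      calc (X:R)^((k+1)^2) * (Bq 1 (n-k) (k+1) + (X:R)^(n-2*k) * Bq 1 (n-k) k)
          = (X:R)^((k+1)^2) * Bq 1 (n-k) (k+1)
            + ((X:R)^((k+1)^2) * (X:R)^(n-2*k)) * Bq 1 (n-k) k := by ring
        _ = _ := by rw [hx]; ring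
    · rw [Bq_eq_zero 1 (show n+2-(k+1) < k+1 by omega),
        Bq_eq_zero 1 (show n+1-(k+1) < k+1 by omega),
        Bq_eq_zero 1 (show n-k < k by omega)]
      ring
  · rw [Bq_eq_zero 1 (show n+2-(k+1) < k+1 by omega),
      Bq_eq_zero 1 (show n+1-(k+1) < k+1 by omega),
      Bq_eq_zero 1 (show n-k < k by omega)]
    ring

lemma Dd_rec (n : ℕ) : Dd (n+2) = Dd (n+1) + (X:R)^(n+1) * Dd n := by
  have peel : Dd (n+2) = ∑ k ∈ Finset.range (n+2),
      (X:R)^((k+1)^2) * Bq 1 (n+2-(k+1)) (k+1) + 1 := by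
    rw [Dd, Finset.sum_range_succ' _ (n+2)]
    norm_num
  rw [peel, Finset.sum_congr rfl (fun k _ => Dd_key n k), Finset.sum_add_distrib]
  have e1 : ∑ k ∈ Finset.range (n+2), (X:R)^((k+1)^2) * Bq 1 (n+1-(k+1)) (k+1) + 1
      = Dd (n+1) := by
    rw [Finset.sum_range_succ,
      Bq_eq_zero 1 (show n+1-(n+1+1) < n+1+1 by omega), mul_zero, add_zero,
      Dd, Finset.sum_range_succ' _ (n+1)]
    norm_num
  have e2 : ∑ k ∈ Finset.range (n+2), (X:R)^(n+1) * ((X:R)^(k^2) * Bq 1 (n-k) k)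
      = (X:R)^(n+1) * Dd n := by
    rw [Dd, Finset.mul_sum, Finset.sum_range_succ]
    rw [Bq_eq_zero 1 (show n-(n+1) < n+1 by omega), mul_zero, mul_zero, add_zero]
  calc ∑ k ∈ Finset.range (n+2), (X:R)^((k+1)^2) * Bq 1 (n+1-(k+1)) (k+1)
        + ∑ k ∈ Finset.range (n+2), (X:R)^(n+1) * ((X:R)^(k^2) * Bq 1 (n-k) k) + 1
      = (∑ k ∈ Finset.range (n+2), (X:R)^((k+1)^2) * Bq 1 (n+1-(k+1)) (k+1) + 1)
        + ∑ k ∈ Finset.range (n+2), (X:R)^(n+1) * ((X:R)^(k^2) * Bq 1 (n-k) k) := by ring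
    _ = Dd (n+1) + (X:R)^(n+1) * Dd n := by rw [e1, e2]

theorem Sch_eq_Dd (n : ℕ) : Sch n = Dd n := by
  induction n using Nat.strong_induction_on with
  | _ n ih =>
    match n with
    | 0 => rw [Sch_zero, Dd_zero]
    | 1 => rw [Sch_one, Dd_one]
    | (m+2) => rw [Sch_rec, Dd_rec, ih m (by omega), ih (m+1) (by omega)]
lemma sum_shift_cancel' {K : ℤ} (f : ℤ → R) (h1 : f (-K-1) = 0) (h2 : f K = 0) :
    ∑ i ∈ Icc (-K) K, f (i-1) = ∑ i ∈ Icc (-K) K, f i := by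
  have e1 : ∑ i ∈ Icc (-K) K, f (i-1) = ∑ j ∈ Icc (-K+ -1) (K+ -1), f j := by
    rw [← Finset.map_add_right_Icc, Finset.sum_map]; rfl
  have e2 : ∑ j ∈ Icc (-K+ -1) (K+ -1), f j = ∑ j ∈ Icc (-K+ -1) K, f j := by
    refine Finset.sum_subset (Finset.Icc_subset_Icc le_rfl (by omega)) ?_
    intro x hx hnx
    simp only [Finset.mem_Icc] at hx hnx
    have : x = K := by omega
    rw [this]; exact h2
  have e3 : ∑ j ∈ Icc (-K) K, f j = ∑ j ∈ Icc (-K+ -1) K, f j := by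
    refine Finset.sum_subset (Finset.Icc_subset_Icc (by omega) le_rfl) ?_
    intro x hx hnx
    simp only [Finset.mem_Icc] at hx hnx
    have : x = -K-1 := by omega
    rw [this]; exact h1
  rw [e1, e2, ← e3]

/-! ### the Jacobi-type sum and product -/
noncomputable def jTermE (m : ℕ) (i : ℤ) : R := (X:R)^(eEv i) * BZ 5 (2*m) ((m:ℤ)+2*i)
noncomputable def jTermO (m : ℕ) (i : ℤ) : R := (X:R)^(eOd i) * BZ 5 (2*m) ((m:ℤ)+2*i+1)
noncomputable def Th (m : ℕ) : R := ∑ i ∈ Icc (-(m:ℤ)-1) ((m:ℤ)+1), (jTermE m i - jTermO m i)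
noncomputable def Pj (m : ℕ) : R :=
  ∏ k ∈ Icc 1 m, ((1 - (X:R)^(5*k-2)) * (1 - (X:R)^(5*k-3)))

lemma jTermE_vanish {m : ℕ} {i : ℤ} (h : i < -(m:ℤ)-1 ∨ (m:ℤ)+1 < i) : jTermE m i = 0 := by
  rcases h with h | h
  · rw [jTermE, BZ_of_neg (by push_cast; omega), mul_zero]
  · rw [jTermE, BZ_of_gt (by push_cast; omega), mul_zero]
lemma jTermO_vanish {m : ℕ} {i : ℤ} (h : i < -(m:ℤ)-1 ∨ (m:ℤ)+1 < i) : jTermO m i = 0 := by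
  rcases h with h | h
  · rw [jTermO, BZ_of_neg (by push_cast; omega), mul_zero]
  · rw [jTermO, BZ_of_gt (by push_cast; omega), mul_zero]

lemma Th_ext (m : ℕ) {K : ℤ} (hK : (m:ℤ)+1 ≤ K) :
    Th m = ∑ i ∈ Icc (-K) K, (jTermE m i - jTermO m i) := by
  refine Finset.sum_subset (Finset.Icc_subset_Icc (by omega) (by omega)) ?_
  intro x hx hnx
  simp only [Finset.mem_Icc] at hx hnx
  have h : x < -(m:ℤ)-1 ∨ (m:ℤ)+1 < x := by omega
  rw [jTermE_vanish h, jTermO_vanish h, sub_zero]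

noncomputable def F2 (m : ℕ) (i : ℤ) : R :=
  (X:R)^(5*m+3) * ((X:R)^(eOd i) * BZ 5 (2*m) ((m:ℤ)+2*i+1))
noncomputable def F3 (m : ℕ) (i : ℤ) : R :=
  (X:R)^(5*m+2) * ((X:R)^(eEv i) * BZ 5 (2*m) ((m:ℤ)+2*i))

lemma jtp_key (m : ℕ) (i : ℤ) :
    jTermE (m+1) i - jTermO (m+1) i =
    ((1 - (X:R)^(5*m+3)) * (1 - (X:R)^(5*m+2))) * (jTermE m i - jTermO m i)
      + (F2 m (i-1) - F2 m i) + (F3 m i - F3 m (i+1)) := by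
  rw [jTermE, jTermO, jTermE, jTermO, F2, F2, F3, F3]
  rw [show ((m+1:ℕ):ℤ) = (m:ℤ)+1 by push_cast; ring, show 2*(m+1) = 2*m+2 by ring]
  -- expand level 2m+2 → 2m+1 → 2m
  have hE : BZ 5 (2*m+2) ((m:ℤ)+1+2*i)
      = Xz (5*((m:ℤ)+1+2*i)) * BZ 5 (2*m) ((m:ℤ)+1+2*i) + BZ 5 (2*m) ((m:ℤ)+2*i)
        + Xz (5*((m:ℤ)+1-2*i)) * (Xz (5*((m:ℤ)+2*i)) * BZ 5 (2*m) ((m:ℤ)+2*i)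
            + BZ 5 (2*m) ((m:ℤ)+2*i-1)) := by
    have h1 := BZ_pascal1 5 (2*m+1) ((m:ℤ)+1+2*i)
    rw [show ((5:ℕ):ℤ) * (((2*m+1:ℕ):ℤ)+1-((m:ℤ)+1+2*i)) = 5*((m:ℤ)+1-2*i) by push_cast; ring,
        show ((m:ℤ)+1+2*i) - 1 = (m:ℤ)+2*i by ring] at h1
    have h2 := BZ_pascal2 5 (2*m) ((m:ℤ)+1+2*i)
    rw [show ((5:ℕ):ℤ) * ((m:ℤ)+1+2*i) = 5*((m:ℤ)+1+2*i) by push_cast; ring,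
        show ((m:ℤ)+1+2*i) - 1 = (m:ℤ)+2*i by ring] at h2
    have h3 := BZ_pascal2 5 (2*m) ((m:ℤ)+2*i)
    rw [show ((5:ℕ):ℤ) * ((m:ℤ)+2*i) = 5*((m:ℤ)+2*i) by push_cast; ring,
        show ((m:ℤ)+2*i) - 1 = (m:ℤ)+2*i-1 by ring] at h3
    rw [h1, h2, h3]
  have hO : BZ 5 (2*m+2) ((m:ℤ)+1+2*i+1)
      = Xz (5*((m:ℤ)+2+2*i)) * (BZ 5 (2*m) ((m:ℤ)+2+2*i)
          + Xz (5*((m:ℤ)-1-2*i)) * BZ 5 (2*m) ((m:ℤ)+2*i+1))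
        + (BZ 5 (2*m) ((m:ℤ)+2*i+1) + Xz (5*((m:ℤ)-2*i)) * BZ 5 (2*m) ((m:ℤ)+2*i)) := by
    have h1 := BZ_pascal2 5 (2*m+1) ((m:ℤ)+2+2*i)
    rw [show ((5:ℕ):ℤ) * ((m:ℤ)+2+2*i) = 5*((m:ℤ)+2+2*i) by push_cast; ring,
        show ((m:ℤ)+2+2*i) - 1 = (m:ℤ)+2*i+1 by ring] at h1
    have h2 := BZ_pascal1 5 (2*m) ((m:ℤ)+2+2*i)
    rw [show ((5:ℕ):ℤ) * (((2*m:ℕ):ℤ)+1-((m:ℤ)+2+2*i)) = 5*((m:ℤ)-1-2*i) by push_cast; ring,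
        show ((m:ℤ)+2+2*i) - 1 = (m:ℤ)+2*i+1 by ring] at h2
    have h3 := BZ_pascal1 5 (2*m) ((m:ℤ)+2*i+1)
    rw [show ((5:ℕ):ℤ) * (((2*m:ℕ):ℤ)+1-((m:ℤ)+2*i+1)) = 5*((m:ℤ)-2*i) by push_cast; ring,
        show ((m:ℤ)+2*i+1) - 1 = (m:ℤ)+2*i by ring] at h3
    rw [show (m:ℤ)+1+2*i+1 = (m:ℤ)+2+2*i by ring, h1, h2, h3]
  have cE1 : (X:R)^(eEv i) * (Xz (5*((m:ℤ)+1+2*i)) * BZ 5 (2*m) ((m:ℤ)+1+2*i))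
      = (X:R)^(5*m+2) * ((X:R)^(eOd i) * BZ 5 (2*m) ((m:ℤ)+1+2*i)) := by
    rcases lt_or_ge ((m:ℤ)+1+2*i) 0 with h | h
    · rw [BZ_of_neg h]; ring
    rcases lt_or_ge ((2*m:ℕ):ℤ) ((m:ℤ)+1+2*i) with h' | h'
    · rw [BZ_of_gt h']; ring
    have key : ((eEv i:ℕ):ℤ) + 5*((m:ℤ)+1+2*i) = ((eOd i:ℕ):ℤ) + (5*m+2:ℕ) := by
      rw [eEv_cast, eOd_cast]; push_cast; ring
    have hkey : eEv i + (5*((m:ℤ)+1+2*i)).toNat = (5*m+2) + eOd i := by omega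
    simp only [Xz]
    rw [← mul_assoc, ← mul_assoc, ← pow_add, ← pow_add, hkey]
  have cE3 : Xz (5*((m:ℤ)+1-2*i)) * (Xz (5*((m:ℤ)+2*i)) * BZ 5 (2*m) ((m:ℤ)+2*i))
      = (X:R)^(10*m+5) * BZ 5 (2*m) ((m:ℤ)+2*i) := by
    rcases lt_or_ge ((m:ℤ)+2*i) 0 with h | h
    · rw [BZ_of_neg h]; ring
    rcases lt_or_ge ((2*m:ℕ):ℤ) ((m:ℤ)+2*i) with h' | h'
    · rw [BZ_of_gt h']; ring
    rw [← mul_assoc, Xz_mul_Xz_of _ _ (10*m+5) (by push_cast at h' ⊢; omega)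
      (by omega) (by push_cast; ring)]
  have cE4 : (X:R)^(eEv i) * (Xz (5*((m:ℤ)+1-2*i)) * BZ 5 (2*m) ((m:ℤ)+2*i-1))
      = (X:R)^(5*m+3) * ((X:R)^(eOd (i-1)) * BZ 5 (2*m) ((m:ℤ)+2*(i-1)+1)) := by
    rw [show (m:ℤ)+2*(i-1)+1 = (m:ℤ)+2*i-1 by ring]
    rcases lt_or_ge ((m:ℤ)+2*i-1) 0 with h | h
    · rw [BZ_of_neg h]; ring
    rcases lt_or_ge ((2*m:ℕ):ℤ) ((m:ℤ)+2*i-1) with h' | h'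
    · rw [BZ_of_gt h']; ring
    have key : ((eEv i:ℕ):ℤ) + 5*((m:ℤ)+1-2*i) = ((eOd (i-1):ℕ):ℤ) + (5*m+3:ℕ) := by
      rw [eEv_cast, eOd_cast]; push_cast; ring
    have hnn : (0:ℤ) ≤ 5*((m:ℤ)+1-2*i) := by push_cast at h'; omega
    have hkey : eEv i + (5*((m:ℤ)+1-2*i)).toNat = (5*m+3) + eOd (i-1) := by omega
    simp only [Xz]
    rw [← mul_assoc, ← mul_assoc, ← pow_add, ← pow_add, hkey]
  have cO1 : (X:R)^(eOd i) * (Xz (5*((m:ℤ)+2+2*i)) * BZ 5 (2*m) ((m:ℤ)+2+2*i))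
      = (X:R)^(5*m+2) * ((X:R)^(eEv (i+1)) * BZ 5 (2*m) ((m:ℤ)+2*(i+1))) := by
    rw [show (m:ℤ)+2*(i+1) = (m:ℤ)+2+2*i by ring]
    rcases lt_or_ge ((m:ℤ)+2+2*i) 0 with h | h
    · rw [BZ_of_neg h]; ring
    rcases lt_or_ge ((2*m:ℕ):ℤ) ((m:ℤ)+2+2*i) with h' | h'
    · rw [BZ_of_gt h']; ring
    have key : ((eOd i:ℕ):ℤ) + 5*((m:ℤ)+2+2*i) = ((eEv (i+1):ℕ):ℤ) + (5*m+2:ℕ) := by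
      rw [eEv_cast, eOd_cast]; push_cast; ring
    have hkey : eOd i + (5*((m:ℤ)+2+2*i)).toNat = (5*m+2) + eEv (i+1) := by omega
    simp only [Xz]
    rw [← mul_assoc, ← mul_assoc, ← pow_add, ← pow_add, hkey]
  have cO2 : Xz (5*((m:ℤ)+2+2*i)) * (Xz (5*((m:ℤ)-1-2*i)) * BZ 5 (2*m) ((m:ℤ)+2*i+1))
      = (X:R)^(10*m+5) * BZ 5 (2*m) ((m:ℤ)+2*i+1) := by
    rcases lt_or_ge ((m:ℤ)+2*i+1) 0 with h | h
    · rw [BZ_of_neg h]; ring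
    rcases lt_or_ge ((2*m:ℕ):ℤ) ((m:ℤ)+2*i+1) with h' | h'
    · rw [BZ_of_gt h']; ring
    rw [← mul_assoc, Xz_mul_Xz_of _ _ (10*m+5) (by omega)
      (by push_cast at h' ⊢; omega) (by push_cast; ring)]
  have cO4 : (X:R)^(eOd i) * (Xz (5*((m:ℤ)-2*i)) * BZ 5 (2*m) ((m:ℤ)+2*i))
      = (X:R)^(5*m+3) * ((X:R)^(eEv i) * BZ 5 (2*m) ((m:ℤ)+2*i)) := by
    rcases lt_or_ge ((m:ℤ)+2*i) 0 with h | h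
    · rw [BZ_of_neg h]; ring
    rcases lt_or_ge ((2*m:ℕ):ℤ) ((m:ℤ)+2*i) with h' | h'
    · rw [BZ_of_gt h']; ring
    have key : ((eOd i:ℕ):ℤ) + 5*((m:ℤ)-2*i) = ((eEv i:ℕ):ℤ) + (5*m+3:ℕ) := by
      rw [eEv_cast, eOd_cast]; push_cast; ring
    have hnn : (0:ℤ) ≤ 5*((m:ℤ)-2*i) := by push_cast at h'; omega
    have hkey : eOd i + (5*((m:ℤ)-2*i)).toNat = (5*m+3) + eEv i := by omega
    simp only [Xz]
    rw [← mul_assoc, ← mul_assoc, ← pow_add, ← pow_add, hkey]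
  rw [show (m:ℤ)+1+2*i+1 = (m:ℤ)+2+2*i by ring] at hO ⊢
  rw [hE, hO]
  rw [show (m:ℤ)+2*i+1 = (m:ℤ)+1+2*i by ring] at cO2 ⊢
  linear_combination cE1 + cE4 + (X:R)^(eEv i) * cE3 - cO1 - (X:R)^(eOd i) * cO2 - cO4

theorem Th_rec (m : ℕ) :
    Th (m+1) = ((1 - (X:R)^(5*m+3)) * (1 - (X:R)^(5*m+2))) * Th m := by
  have hK1 : ((m+1:ℕ):ℤ)+1 ≤ (m:ℤ)+2 := by push_cast; omega
  have hK0 : ((m:ℕ):ℤ)+1 ≤ (m:ℤ)+2 := by omega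
  rw [Th_ext (m+1) hK1, Th_ext m hK0, Finset.mul_sum]
  have tele2 : ∑ i ∈ Icc (-((m:ℤ)+2)) ((m:ℤ)+2), (F2 m (i-1) - F2 m i) = 0 := by
    rw [Finset.sum_sub_distrib]
    rw [sum_shift_cancel' (K := (m:ℤ)+2) (F2 m) ?_ ?_, sub_self]
    · rw [F2, BZ_of_neg (by push_cast; omega)]; ring
    · rw [F2, BZ_of_gt (by push_cast; omega)]; ring
  have tele3 : ∑ i ∈ Icc (-((m:ℤ)+2)) ((m:ℤ)+2), (F3 m i - F3 m (i+1)) = 0 := by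
    rw [Finset.sum_sub_distrib]
    rw [sum_shift_cancel (K := (m:ℤ)+2) (F3 m) ?_ ?_, sub_self]
    · rw [F3, BZ_of_gt (by push_cast; omega)]; ring
    · rw [F3, BZ_of_neg (by push_cast; omega)]; ring
  calc ∑ i ∈ Icc (-((m:ℤ)+2)) ((m:ℤ)+2), (jTermE (m+1) i - jTermO (m+1) i)
      = ∑ i ∈ Icc (-((m:ℤ)+2)) ((m:ℤ)+2),
          (((1 - (X:R)^(5*m+3)) * (1 - (X:R)^(5*m+2))) * (jTermE m i - jTermO m i)
            + (F2 m (i-1) - F2 m i) + (F3 m i - F3 m (i+1))) :=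
        Finset.sum_congr rfl fun i _ => jtp_key m i
    _ = _ := by
        rw [Finset.sum_add_distrib, Finset.sum_add_distrib, tele2, tele3, add_zero, add_zero]

lemma Th_zero : Th 0 = 1 := by
  rw [Th]
  rw [Finset.sum_eq_single_of_mem 0 (by simp)]
  · have ha : jTermE 0 0 = 1 := by
      rw [jTermE, show ((0:ℕ):ℤ) + 2*(0:ℤ) = ((0:ℕ):ℤ) by norm_num, BZ_natCast,
        Bq_zero_right', mul_one, show eEv 0 = 0 by rw [eEv]; norm_num, pow_zero]
    have hb : jTermO 0 0 = 0 := by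
      rw [jTermO, BZ_of_gt (show ((2*0:ℕ):ℤ) < ((0:ℕ):ℤ)+2*0+1 by norm_num), mul_zero]
    rw [ha, hb, sub_zero]
  · intro b _ hb0
    have hE : jTermE 0 b = 0 := by
      rcases lt_or_ge b 0 with h | h
      · rw [jTermE, BZ_of_neg (by norm_num; omega), mul_zero]
      · rw [jTermE, BZ_of_gt (by norm_num; omega), mul_zero]
    have hO : jTermO 0 b = 0 := by
      rcases lt_or_ge b 0 with h | h
      · rw [jTermO, BZ_of_neg (by norm_num; omega), mul_zero]
      · rw [jTermO, BZ_of_gt (by norm_num; omega), mul_zero]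
    rw [hE, hO, sub_zero]

theorem Th_eq_Pj (m : ℕ) : Th m = Pj m := by
  induction m with
  | zero => rw [Th_zero, Pj]; simp
  | succ m ih =>
    rw [Th_rec, ih, Pj, Pj, Finset.prod_Icc_succ_top (by omega : 1 ≤ m+1)]
    rw [show 5*(m+1)-2 = 5*m+3 by omega, show 5*(m+1)-3 = 5*m+2 by omega]
    ring
/-! ### section F: generic limit lemmas -/
lemma Cong.sub {T : ℕ} {A B C D : R} (h : Cong T A B) (h' : Cong T C D) :
    Cong T (A - C) (B - D) := by
  intro k hk
  simp only [map_sub, h k hk, h' k hk]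
lemma Cong.X_pow_zero {T e : ℕ} (h : T < e) : Cong T ((X:R)^e) 0 := by
  intro k hk
  rw [coeff_X_pow, if_neg (by omega), map_zero]
lemma Icc_one_eq_Ioc_zero (n : ℕ) : Icc 1 n = Ioc 0 n := by
  ext x; simp only [mem_Icc, mem_Ioc]; omega
lemma Poch_split (d j n : ℕ) (h : j ≤ n) :
    Poch d n = Poch d j * ∏ i ∈ Ioc j n, (1 - (X:R)^(d*i)) := by
  rw [Poch, Poch, Icc_one_eq_Ioc_zero, Icc_one_eq_Ioc_zero,
    Finset.prod_Ioc_consecutive _ (Nat.zero_le j) h]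
noncomputable def FinvPd (d k : ℕ) : R := ∏ i ∈ Icc 1 k, Finv (d*i)
lemma FinvPd_inv (d k : ℕ) (hd : 1 ≤ d) : Poch d k * FinvPd d k = 1 := by
  rw [Poch, FinvPd, ← Finset.prod_mul_distrib]
  rw [Finset.prod_congr rfl (fun i hi => Finv_inv (m := d*i)
    (by simp only [mem_Icc] at hi; exact Nat.mul_pos hd hi.1))]
  exact Finset.prod_const_one
lemma cancel_of_unit {a b c v : R} (h : a * c = b * c) (hv : c * v = 1) : a = b := by
  have := congrArg (· * v) h
  simpa [mul_assoc, hv] using this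
lemma Poch_mul_Bq (d n k : ℕ) (hd : 1 ≤ d) (h : k ≤ n) :
    Poch d k * Bq d n k = ∏ i ∈ Ioc (n-k) n, (1 - (X:R)^(d*i)) := by
  refine cancel_of_unit (c := Poch d (n-k)) ?_ (FinvPd_inv d (n-k) hd)
  calc Poch d k * Bq d n k * Poch d (n-k) = Poch d k * Poch d (n-k) * Bq d n k := by ring
    _ = Poch d n := Bq_fact d n k h
    _ = Poch d (n-k) * ∏ i ∈ Ioc (n-k) n, (1 - (X:R)^(d*i)) := Poch_split d (n-k) n (by omega)
    _ = (∏ i ∈ Ioc (n-k) n, (1 - (X:R)^(d*i))) * Poch d (n-k) := by ring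
lemma Cong.prod_one {T : ℕ} {s : Finset ℕ} {f : ℕ → R} (h : ∀ i ∈ s, Cong T (f i) 1) :
    Cong T (∏ i ∈ s, f i) 1 := by
  induction s using Finset.cons_induction with
  | empty => rw [Finset.prod_empty]; exact Cong.refl
  | cons a s ha ih =>
    rw [Finset.prod_cons]
    have := (h a (Finset.mem_cons_self a s)).mul (ih fun i hi => h i (Finset.mem_cons.mpr (Or.inr hi)))
    rwa [one_mul] at this
lemma Cong.Ioc_one {T : ℕ} (d a b : ℕ) (h : T < d*(a+1)) :
    Cong T (∏ i ∈ Ioc a b, (1 - (X:R)^(d*i))) 1 := by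
  refine Cong.prod_one fun i hi => ?_
  simp only [mem_Ioc] at hi
  exact Cong.one_sub_Xpow_one (by calc T < d*(a+1) := h
    _ ≤ d*i := Nat.mul_le_mul_left d (by omega))
lemma cong_poch_mul_Bq {T : ℕ} (d P n k : ℕ) (hd : 1 ≤ d) (hk : k ≤ n) (hkP : k ≤ P)
    (h1 : T < d*(k+1)) (h2 : T < d*(n-k+1)) :
    Cong T (Poch d P * Bq d n k) 1 := by
  rw [Poch_split d k P hkP]
  have e : Poch d k * (∏ i ∈ Ioc k P, (1 - (X:R)^(d*i))) * Bq d n k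
      = (Poch d k * Bq d n k) * ∏ i ∈ Ioc k P, (1 - (X:R)^(d*i)) := by ring
  rw [e, Poch_mul_Bq d n k hd hk]
  have := (Cong.Ioc_one (T := T) d (n-k) n h2).mul (Cong.Ioc_one (T := T) d k P h1)
  rwa [one_mul] at this
lemma cong_Bq_FinvPd {T : ℕ} (d n k : ℕ) (hd : 1 ≤ d) (hk : k ≤ n)
    (h1 : T < d*(n-k+1)) :
    Cong T (Bq d n k) (FinvPd d k) := by
  have e : Bq d n k = FinvPd d k * (Poch d k * Bq d n k) := by
    rw [← mul_assoc, mul_comm (FinvPd d k) (Poch d k), FinvPd_inv d k hd, one_mul]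
  rw [e, Poch_mul_Bq d n k hd hk]
  have h := (Cong.refl (A := FinvPd d k)).mul (Cong.Ioc_one (T:=T) d (n-k) n h1)
  rwa [mul_one] at h

/-! ### Section G : assembling the limit arguments -/

noncomputable def theta (K : ℤ) : R := ∑ i ∈ Icc (-K) K, ((X:R)^(eEv i) - (X:R)^(eOd i))

lemma eEv_bounds {N : ℕ} {i : ℤ} (h : eEv i ≤ N) : 5*i ≤ (N:ℤ)+1 ∧ -(5*i) ≤ (N:ℤ)+1 := by
  have hc := eEv_cast i
  have h' : i*(10*i+1) ≤ (N:ℤ) := by omega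
  constructor
  · rcases le_or_gt i 0 with hi | hi
    · omega
    · nlinarith [mul_nonneg (by omega : (0:ℤ) ≤ i-1) (by omega : (0:ℤ) ≤ i)]
  · rcases le_or_gt 0 i with hi | hi
    · omega
    · nlinarith [sq_nonneg (10*i+3)]

lemma eOd_bounds {N : ℕ} {i : ℤ} (h : eOd i ≤ N) :
    5*i ≤ (N:ℤ)+1 ∧ -(5*i) ≤ (N:ℤ)+7 ∧ 2 ≤ N := by
  have hc := eOd_cast i
  have h' : (2*i+1)*(5*i+3) ≤ (N:ℤ) := by omega
  refine ⟨?_, ?_, ?_⟩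
  · rcases le_or_gt i 0 with hi | hi
    · omega
    · nlinarith [mul_nonneg (by omega : (0:ℤ) ≤ i-1) (by omega : (0:ℤ) ≤ i)]
  · rcases le_or_gt 0 i with hi | hi
    · omega
    · nlinarith [sq_nonneg (10*i+8)]
  · have h2 : (2:ℤ) ≤ (2*i+1)*(5*i+3) := by
      rcases le_or_gt 0 i with hi | hi
      · nlinarith
      · have hi1 : i ≤ -1 := by omega
        nlinarith [mul_le_mul (by omega : (1:ℤ) ≤ -(2*i+1)) (by omega : (2:ℤ) ≤ -(5*i+3))
          (by omega) (by omega)]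
    omega

lemma eEv_ge_sq (i : ℤ) : i^2 ≤ ((eEv i : ℕ) : ℤ) := by
  rw [eEv_cast]
  rcases le_or_gt 0 i with hi | hi
  · nlinarith
  · nlinarith
lemma eOd_ge_sq (i : ℤ) : i^2 ≤ ((eOd i : ℕ) : ℤ) := by
  rw [eOd_cast]
  rcases le_or_gt 0 i with hi | hi
  · nlinarith
  · nlinarith [sq_nonneg (3*i+2)]

lemma theta_aux {N : ℕ} {K : ℤ} (hK : (N:ℤ)+1 ≤ K) :
    Cong N (theta K) (theta ((N:ℤ)+1)) := by
  have hsub : Icc (-((N:ℤ)+1)) ((N:ℤ)+1) ⊆ Icc (-K) K :=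
    Finset.Icc_subset_Icc (by omega) (by omega)
  rw [theta, theta, ← Finset.sum_sdiff hsub]
  have h0 : Cong N (∑ i ∈ Icc (-K) K \ Icc (-((N:ℤ)+1)) ((N:ℤ)+1),
      ((X:R)^(eEv i) - (X:R)^(eOd i))) 0 := by
    have hz : Cong N (∑ i ∈ Icc (-K) K \ Icc (-((N:ℤ)+1)) ((N:ℤ)+1),
        ((X:R)^(eEv i) - (X:R)^(eOd i)))
        (∑ _i ∈ Icc (-K) K \ Icc (-((N:ℤ)+1)) ((N:ℤ)+1), ((0:R) - 0)) := by
      refine Cong.sum fun i hi => ?_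
      simp only [Finset.mem_sdiff, Finset.mem_Icc, not_and, not_le] at hi
      have hi2 : (N:ℤ)+2 ≤ i ∨ i ≤ -((N:ℤ)+2) := by omega
      have hsq : ((N:ℤ)+2)^2 ≤ i^2 := by rcases hi2 with h | h <;> nlinarith
      have hE : N < eEv i := by have := eEv_ge_sq i; have : (N:ℤ) < (eEv i : ℤ) := by nlinarith
                                omega
      have hO : N < eOd i := by have := eOd_ge_sq i; have : (N:ℤ) < (eOd i : ℤ) := by nlinarith
                                omega
      exact (Cong.X_pow_zero hE).sub (Cong.X_pow_zero hO)
    have : (∑ _i ∈ Icc (-K) K \ Icc (-((N:ℤ)+1)) ((N:ℤ)+1), ((0:R) - 0)) = 0 := by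
      simp
    rwa [this] at hz
  have := h0.add (Cong.refl (A := ∑ i ∈ Icc (-((N:ℤ)+1)) ((N:ℤ)+1),
    ((X:R)^(eEv i) - (X:R)^(eOd i))))
  rwa [zero_add] at this

lemma theta_cong {N : ℕ} {K1 K2 : ℤ} (h1 : (N:ℤ)+1 ≤ K1) (h2 : (N:ℤ)+1 ≤ K2) :
    Cong N (theta K1) (theta K2) := (theta_aux h1).trans (theta_aux h2).symm

lemma cong_through_zero {T : ℕ} {A B : R} (hA : Cong T A 0) (hB : Cong T B 0) : Cong T A B :=
  hA.trans hB.symm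

/-- S2 : Schur-side limit -/
lemma cong_sch_theta (N : ℕ) :
    Cong N (Poch 1 (2*(8*N+8)) * Sch (8*N+8)) (theta (((8*N+8:ℕ):ℤ)+1)) := by
  rw [Sch, theta, Finset.mul_sum]
  refine Cong.sum fun i _ => ?_
  have hmul : Poch 1 (2*(8*N+8)) * (sTermE (8*N+8) i - sTermO (8*N+8) i)
      = Poch 1 (2*(8*N+8)) * sTermE (8*N+8) i - Poch 1 (2*(8*N+8)) * sTermO (8*N+8) i := by
    ring
  rw [hmul]
  have partE : Cong N (Poch 1 (2*(8*N+8)) * sTermE (8*N+8) i) ((X:R)^(eEv i)) := by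
    rw [sTermE_unfold (show (((8*N+8)/2:ℕ):ℤ) = 4*(N:ℤ)+4 by omega)]
    rcases le_or_gt (eEv i) N with he | he
    · obtain ⟨hb1, hb2⟩ := eEv_bounds he
      have ha0 : 0 ≤ 4*(N:ℤ)+4 - 5*i := by omega
      rw [BZ, if_pos ha0]
      set k := (4*(N:ℤ)+4 - 5*i).toNat with hk
      have e : Poch 1 (2*(8*N+8)) * ((X:R)^(eEv i) * Bq 1 (8*N+8) k)
          = (X:R)^(eEv i) * (Poch 1 (2*(8*N+8)) * Bq 1 (8*N+8) k) := by ring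
      rw [e]
      have hc := cong_poch_mul_Bq (T := N - eEv i) 1 (2*(8*N+8)) (8*N+8) k le_rfl
        (by omega) (by omega) (by omega) (by omega)
      have := Cong.Xpow_mul (e := eEv i) hc he
      rwa [mul_one] at this
    · refine cong_through_zero ?_ (Cong.X_pow_zero he)
      have e : Poch 1 (2*(8*N+8)) * ((X:R)^(eEv i) * BZ 1 (8*N+8) (4*(N:ℤ)+4-5*i))
          = (X:R)^(eEv i) * (Poch 1 (2*(8*N+8)) * BZ 1 (8*N+8) (4*(N:ℤ)+4-5*i)) := by ring
      rw [e]
      exact Cong.Xpow_mul_zero _ he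
  have partO : Cong N (Poch 1 (2*(8*N+8)) * sTermO (8*N+8) i) ((X:R)^(eOd i)) := by
    rw [sTermO_unfold (show (((8*N+8+1)/2:ℕ):ℤ) = 4*(N:ℤ)+4 by omega)]
    rcases le_or_gt (eOd i) N with he | he
    · obtain ⟨hb1, hb2, hbN⟩ := eOd_bounds he
      have ha0 : 0 ≤ 4*(N:ℤ)+4 - 3 - 5*i := by omega
      rw [BZ, if_pos ha0]
      set k := (4*(N:ℤ)+4 - 3 - 5*i).toNat with hk
      have e : Poch 1 (2*(8*N+8)) * ((X:R)^(eOd i) * Bq 1 (8*N+8) k)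
          = (X:R)^(eOd i) * (Poch 1 (2*(8*N+8)) * Bq 1 (8*N+8) k) := by ring
      rw [e]
      have hc := cong_poch_mul_Bq (T := N - eOd i) 1 (2*(8*N+8)) (8*N+8) k le_rfl
        (by omega) (by omega) (by omega) (by omega)
      have := Cong.Xpow_mul (e := eOd i) hc he
      rwa [mul_one] at this
    · refine cong_through_zero ?_ (Cong.X_pow_zero he)
      have e : Poch 1 (2*(8*N+8)) * ((X:R)^(eOd i) * BZ 1 (8*N+8) (4*(N:ℤ)+4-3-5*i))
          = (X:R)^(eOd i) * (Poch 1 (2*(8*N+8)) * BZ 1 (8*N+8) (4*(N:ℤ)+4-3-5*i)) := by ring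
      rw [e]
      exact Cong.Xpow_mul_zero _ he
  exact partE.sub partO

/-- S3 : Jacobi-side limit -/
lemma cong_th_theta (N : ℕ) :
    Cong N (Poch 5 (3*(N+1)) * Th (N+1)) (theta (((N+1:ℕ):ℤ)+1)) := by
  rw [Th, theta, Finset.mul_sum]
  refine Cong.sum fun i _ => ?_
  have hmul : Poch 5 (3*(N+1)) * (jTermE (N+1) i - jTermO (N+1) i)
      = Poch 5 (3*(N+1)) * jTermE (N+1) i - Poch 5 (3*(N+1)) * jTermO (N+1) i := by ring
  rw [hmul]
  have partE : Cong N (Poch 5 (3*(N+1)) * jTermE (N+1) i) ((X:R)^(eEv i)) := by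
    rw [jTermE]
    rcases le_or_gt (eEv i) N with he | he
    · obtain ⟨hb1, hb2⟩ := eEv_bounds he
      have ha0 : 0 ≤ ((N+1:ℕ):ℤ) + 2*i := by push_cast; omega
      rw [BZ, if_pos ha0]
      set k := (((N+1:ℕ):ℤ) + 2*i).toNat with hk
      have hkk : (k:ℤ) = ((N+1:ℕ):ℤ) + 2*i := by omega
      have e : Poch 5 (3*(N+1)) * ((X:R)^(eEv i) * Bq 5 (2*(N+1)) k)
          = (X:R)^(eEv i) * (Poch 5 (3*(N+1)) * Bq 5 (2*(N+1)) k) := by ring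
      rw [e]
      have hc := cong_poch_mul_Bq (T := N - eEv i) 5 (3*(N+1)) (2*(N+1)) k (by omega)
        (by push_cast at hkk; omega) (by push_cast at hkk; omega)
        (by push_cast at hkk; omega) (by push_cast at hkk; omega)
      have := Cong.Xpow_mul (e := eEv i) hc he
      rwa [mul_one] at this
    · refine cong_through_zero ?_ (Cong.X_pow_zero he)
      have e : Poch 5 (3*(N+1)) * ((X:R)^(eEv i) * BZ 5 (2*(N+1)) (((N+1:ℕ):ℤ)+2*i))
          = (X:R)^(eEv i) * (Poch 5 (3*(N+1)) * BZ 5 (2*(N+1)) (((N+1:ℕ):ℤ)+2*i)) := by ring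
      rw [e]
      exact Cong.Xpow_mul_zero _ he
  have partO : Cong N (Poch 5 (3*(N+1)) * jTermO (N+1) i) ((X:R)^(eOd i)) := by
    rw [jTermO]
    rcases le_or_gt (eOd i) N with he | he
    · obtain ⟨hb1, hb2, hbN⟩ := eOd_bounds he
      have ha0 : 0 ≤ ((N+1:ℕ):ℤ) + 2*i + 1 := by push_cast; omega
      rw [BZ, if_pos ha0]
      set k := (((N+1:ℕ):ℤ) + 2*i + 1).toNat with hk
      have hkk : (k:ℤ) = ((N+1:ℕ):ℤ) + 2*i + 1 := by omega
      have e : Poch 5 (3*(N+1)) * ((X:R)^(eOd i) * Bq 5 (2*(N+1)) k)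
          = (X:R)^(eOd i) * (Poch 5 (3*(N+1)) * Bq 5 (2*(N+1)) k) := by ring
      rw [e]
      have hc := cong_poch_mul_Bq (T := N - eOd i) 5 (3*(N+1)) (2*(N+1)) k (by omega)
        (by push_cast at hkk; omega) (by push_cast at hkk; omega)
        (by push_cast at hkk; omega) (by push_cast at hkk; omega)
      have := Cong.Xpow_mul (e := eOd i) hc he
      rwa [mul_one] at this
    · refine cong_through_zero ?_ (Cong.X_pow_zero he)
      have e : Poch 5 (3*(N+1)) * ((X:R)^(eOd i) * BZ 5 (2*(N+1)) (((N+1:ℕ):ℤ)+2*i+1))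
          = (X:R)^(eOd i) * (Poch 5 (3*(N+1)) * BZ 5 (2*(N+1)) (((N+1:ℕ):ℤ)+2*i+1)) := by ring
      rw [e]
      exact Cong.Xpow_mul_zero _ he
  exact partE.sub partO

lemma sq_le_imp {k N : ℕ} (h : k^2 ≤ N) : k ≤ N :=
  le_trans (Nat.le_self_pow (by norm_num) k) h

/-- S1 : sum-side limit -/
lemma cong_Dd (N : ℕ) :
    Cong N (Dd (8*N+8)) (∑ n ∈ (Finset.range (N+1)).filter (fun n => n^2 ≤ N),
      (X:R)^(n^2) * FinvPd 1 n) := by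
  have hset : (Finset.range (N+1)).filter (fun n => n^2 ≤ N)
      = (Finset.range (8*N+8+1)).filter (fun n => n^2 ≤ N) := by
    ext x
    simp only [Finset.mem_filter, Finset.mem_range]
    constructor
    · rintro ⟨h1, h2⟩; exact ⟨by omega, h2⟩
    · rintro ⟨h1, h2⟩; exact ⟨by have := sq_le_imp h2; omega, h2⟩
  rw [hset, Finset.sum_filter, Dd]
  refine Cong.sum fun k hk => ?_
  simp only [Finset.mem_range] at hk
  by_cases h2 : k^2 ≤ N
  · rw [if_pos h2]
    have hkN := sq_le_imp h2
    refine (Cong.Xpow_mul ?_ h2).symm.symm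
    exact cong_Bq_FinvPd 1 (8*N+8-k) k le_rfl (by omega) (by omega)
  · rw [if_neg h2]
    exact Cong.Xpow_mul_zero _ (by omega)

/-- S5a : exact product identity -/
lemma Poch5_mul_Pj (m : ℕ) : Poch 5 m * Pj m
    = ∏ j ∈ (Icc 1 (5*m)).filter (fun j => j % 5 = 0 ∨ j % 5 = 2 ∨ j % 5 = 3),
        (1 - (X:R)^j) := by
  induction m with
  | zero => simp [Poch, Pj]
  | succ m ih =>
    have hset : (Icc 1 (5*(m+1))).filter (fun j => j%5=0 ∨ j%5=2 ∨ j%5=3)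
        = insert (5*m+5) (insert (5*m+3) (insert (5*m+2)
            ((Icc 1 (5*m)).filter (fun j => j%5=0 ∨ j%5=2 ∨ j%5=3)))) := by
      ext x
      simp only [Finset.mem_filter, Finset.mem_Icc, Finset.mem_insert]
      omega
    rw [hset, Finset.prod_insert (by
        simp only [Finset.mem_insert, Finset.mem_filter, Finset.mem_Icc]; omega),
      Finset.prod_insert (by
        simp only [Finset.mem_insert, Finset.mem_filter, Finset.mem_Icc]; omega),
      Finset.prod_insert (by
        simp only [Finset.mem_filter, Finset.mem_Icc]; omega), ← ih]
    rw [Poch_succ, Pj, Finset.prod_Icc_succ_top (by omega : 1 ≤ m+1), ← Pj]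
    rw [show 5*(m+1)-2 = 5*m+3 by omega, show 5*(m+1)-3 = 5*m+2 by omega,
      show 5*(m+1) = 5*m+5 by ring]
    ring

/-- S5b -/
lemma cong_filter_prod {N B : ℕ} (hB : N ≤ B) (P : ℕ → Prop) [DecidablePred P] :
    Cong N (∏ j ∈ (Icc 1 B).filter P, (1 - (X:R)^j))
      (∏ j ∈ (Icc 1 N).filter P, (1 - (X:R)^j)) := by
  have hsub : (Icc 1 N).filter P ⊆ (Icc 1 B).filter P :=
    Finset.filter_subset_filter _ (Finset.Icc_subset_Icc le_rfl hB)
  rw [← Finset.prod_sdiff hsub]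
  have h1 : Cong N (∏ j ∈ ((Icc 1 B).filter P) \ ((Icc 1 N).filter P), (1 - (X:R)^j)) 1 :=
    Cong.prod_one fun j hj => Cong.one_sub_Xpow_one (by
      simp only [Finset.mem_sdiff, Finset.mem_filter, Finset.mem_Icc] at hj
      rcases hj with ⟨⟨⟨hj1, hj2⟩, hj3⟩, hj4⟩
      by_contra hc
      exact hj4 ⟨⟨hj1, by omega⟩, hj3⟩)
  have h2 := h1.mul (Cong.refl (A := ∏ j ∈ (Icc 1 N).filter P, (1 - (X:R)^j)))
  rwa [one_mul] at h2

lemma cong_poch_ext {N : ℕ} (d a b : ℕ) (hab : a ≤ b) (h : N < d*(a+1)) :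
    Cong N (Poch d b) (Poch d a) := by
  rw [Poch_split d a b hab]
  have h2 := (Cong.refl (A := Poch d a)).mul (Cong.Ioc_one d a b h)
  rwa [mul_one] at h2

/-- the main congruence -/
theorem main_cong (N : ℕ) :
    Cong N (∏ m ∈ (Icc 1 N).filter (fun m => m % 5 = 1 ∨ m % 5 = 4), Finv m)
      (∑ n ∈ (Finset.range (N+1)).filter (fun n => n^2 ≤ N), (X:R)^(n^2) * FinvPd 1 n) := by
  refine Cong.cancel (U := Poch 1 N) (V := FinvPd 1 N) (FinvPd_inv 1 N le_rfl) ?_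
  have hPoch1 : Poch 1 N = ∏ m ∈ Icc 1 N, (1 - (X:R)^m) :=
    Finset.prod_congr rfl fun i _ => by rw [one_mul]
  have hL : Poch 1 N * ∏ m ∈ (Icc 1 N).filter (fun m => m % 5 = 1 ∨ m % 5 = 4), Finv m
      = ∏ m ∈ (Icc 1 N).filter (fun m => ¬(m % 5 = 1 ∨ m % 5 = 4)), (1 - (X:R)^m) := by
    rw [hPoch1, ← Finset.prod_filter_mul_prod_filter_not (Icc 1 N)
      (fun m => m % 5 = 1 ∨ m % 5 = 4) (fun m => 1 - (X:R)^m)]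
    have hone : (∏ m ∈ (Icc 1 N).filter (fun m => m % 5 = 1 ∨ m % 5 = 4), (1 - (X:R)^m))
        * (∏ m ∈ (Icc 1 N).filter (fun m => m % 5 = 1 ∨ m % 5 = 4), Finv m) = 1 := by
      rw [← Finset.prod_mul_distrib]
      rw [Finset.prod_congr rfl (fun m hm => Finv_inv (m := m) (by
        simp only [Finset.mem_filter, Finset.mem_Icc] at hm; omega))]
      exact Finset.prod_const_one
    calc (∏ m ∈ (Icc 1 N).filter (fun m => m % 5 = 1 ∨ m % 5 = 4), (1 - (X:R)^m))
          * (∏ m ∈ (Icc 1 N).filter (fun m => ¬(m % 5 = 1 ∨ m % 5 = 4)), (1 - (X:R)^m))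
          * ∏ m ∈ (Icc 1 N).filter (fun m => m % 5 = 1 ∨ m % 5 = 4), Finv m
        = (∏ m ∈ (Icc 1 N).filter (fun m => ¬(m % 5 = 1 ∨ m % 5 = 4)), (1 - (X:R)^m))
          * ((∏ m ∈ (Icc 1 N).filter (fun m => m % 5 = 1 ∨ m % 5 = 4), (1 - (X:R)^m))
            * ∏ m ∈ (Icc 1 N).filter (fun m => m % 5 = 1 ∨ m % 5 = 4), Finv m) := by ring
      _ = _ := by rw [hone, mul_one]
  rw [hL]
  have hswap : (Icc 1 N).filter (fun m => ¬(m % 5 = 1 ∨ m % 5 = 4))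
      = (Icc 1 N).filter (fun j => j % 5 = 0 ∨ j % 5 = 2 ∨ j % 5 = 3) := by
    ext x
    simp only [Finset.mem_filter, Finset.mem_Icc]
    omega
  rw [hswap]
  -- the chain
  have c1 : Cong N (∏ j ∈ (Icc 1 N).filter (fun j => j % 5 = 0 ∨ j % 5 = 2 ∨ j % 5 = 3),
        (1 - (X:R)^j))
      (∏ j ∈ (Icc 1 (5*(N+1))).filter (fun j => j % 5 = 0 ∨ j % 5 = 2 ∨ j % 5 = 3),
        (1 - (X:R)^j)) := (cong_filter_prod (by omega) _).symm
  have c2 : Cong N (∏ j ∈ (Icc 1 (5*(N+1))).filter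
        (fun j => j % 5 = 0 ∨ j % 5 = 2 ∨ j % 5 = 3), (1 - (X:R)^j))
      (Poch 5 (3*(N+1)) * Th (N+1)) := by
    rw [Th_eq_Pj, Poch_split 5 (N+1) (3*(N+1)) (by omega)]
    have e : Poch 5 (N+1) * (∏ i ∈ Ioc (N+1) (3*(N+1)), (1 - (X:R)^(5*i))) * Pj (N+1)
        = (Poch 5 (N+1) * Pj (N+1)) * ∏ i ∈ Ioc (N+1) (3*(N+1)), (1 - (X:R)^(5*i)) := by
      ring
    rw [e, Poch5_mul_Pj]
    have h2 := (Cong.refl (A := ∏ j ∈ (Icc 1 (5*(N+1))).filter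
        (fun j => j % 5 = 0 ∨ j % 5 = 2 ∨ j % 5 = 3), (1 - (X:R)^j))).mul
      (Cong.Ioc_one (T := N) 5 (N+1) (3*(N+1)) (by omega))
    rw [mul_one] at h2
    exact h2.symm
  have c4 := cong_th_theta N
  have c5 : Cong N (theta (((N+1:ℕ):ℤ)+1)) (theta (((8*N+8:ℕ):ℤ)+1)) :=
    theta_cong (by push_cast; omega) (by push_cast; omega)
  have c6 := (cong_sch_theta N).symm
  rw [Sch_eq_Dd] at c6
  have c8 : Cong N (Poch 1 (2*(8*N+8)) * Dd (8*N+8))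
      (Poch 1 (2*(8*N+8)) * ∑ n ∈ (Finset.range (N+1)).filter (fun n => n^2 ≤ N),
        (X:R)^(n^2) * FinvPd 1 n) := Cong.refl.mul (cong_Dd N)
  have c9 : Cong N (Poch 1 (2*(8*N+8)) * ∑ n ∈ (Finset.range (N+1)).filter
        (fun n => n^2 ≤ N), (X:R)^(n^2) * FinvPd 1 n)
      (Poch 1 N * ∑ n ∈ (Finset.range (N+1)).filter (fun n => n^2 ≤ N),
        (X:R)^(n^2) * FinvPd 1 n) :=
    (cong_poch_ext 1 N (2*(8*N+8)) (by omega) (by omega)).mul Cong.refl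
  exact c1.trans (c2.trans (c4.trans (c5.trans (c6.trans (c8.trans c9)))))

end RR

open RR in
/-- first Rogers–Ramanujan identity, generating-function form,
coefficientwise.  In `ℤ⟦q⟧`, let `inv m` denote the inverse `(1 − q^m)⁻¹` of the unit
`1 − q^m` (`m ≥ 1`).  For every natural number `N`, the coefficient of `q^N` in
`∏_{1 ≤ m ≤ N, m ≡ 1 or 4 (mod 5)} (1 − q^m)⁻¹` equals
`∑_{n ≥ 0, n² ≤ N}` (coefficient of `q^N` in `q^{n²} · ∏_{i=1}^{n} (1 − q^i)⁻¹`). -/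
theorem statement10 (N : ℕ) (inv : ℕ → PowerSeries ℤ)
    (hinv : ∀ m : ℕ, 1 ≤ m → (1 - (X : PowerSeries ℤ) ^ m) * inv m = 1) :
    (coeff (R := ℤ) N)
      (∏ m ∈ (Finset.range (N + 1)).filter
        (fun m => 1 ≤ m ∧ (m % 5 = 1 ∨ m % 5 = 4)), inv m) =
    ∑ n ∈ (Finset.range (N + 1)).filter (fun n => n ^ 2 ≤ N),
      (coeff (R := ℤ) N) ((X : PowerSeries ℤ) ^ (n ^ 2) * ∏ i ∈ Finset.Icc 1 n, inv i) := by
  classical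
  have hprod1 : (∏ m ∈ (Finset.range (N + 1)).filter
        (fun m => 1 ≤ m ∧ (m % 5 = 1 ∨ m % 5 = 4)), inv m)
      = ∏ m ∈ (Finset.Icc 1 N).filter (fun m => m % 5 = 1 ∨ m % 5 = 4), Finv m := by
    rw [show (Finset.range (N + 1)).filter (fun m => 1 ≤ m ∧ (m % 5 = 1 ∨ m % 5 = 4))
        = (Finset.Icc 1 N).filter (fun m => m % 5 = 1 ∨ m % 5 = 4) from by
      ext x
      simp only [Finset.mem_filter, Finset.mem_range, Finset.mem_Icc]
      omega]
    refine Finset.prod_congr rfl fun m hm => ?_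
    simp only [Finset.mem_filter, Finset.mem_Icc] at hm
    exact inv_eq_Finv hm.1.1 (hinv m hm.1.1)
  have hprod2 : ∀ n : ℕ, (∏ i ∈ Finset.Icc 1 n, inv i) = FinvPd 1 n := by
    intro n
    rw [FinvPd]
    refine Finset.prod_congr rfl fun i hi => ?_
    simp only [Finset.mem_Icc] at hi
    rw [one_mul]
    exact inv_eq_Finv hi.1 (hinv i hi.1)
  rw [hprod1]
  calc (coeff (R := ℤ) N) (∏ m ∈ (Finset.Icc 1 N).filter (fun m => m % 5 = 1 ∨ m % 5 = 4), Finv m)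
      = (coeff (R := ℤ) N) (∑ n ∈ (Finset.range (N+1)).filter (fun n => n^2 ≤ N),
          (X:PowerSeries ℤ)^(n^2) * FinvPd 1 n) := main_cong N N le_rfl
    _ = ∑ n ∈ (Finset.range (N+1)).filter (fun n => n^2 ≤ N),
          (coeff (R := ℤ) N) ((X:PowerSeries ℤ)^(n^2) * FinvPd 1 n) := map_sum _ _ _
    _ = _ := Finset.sum_congr rfl fun n _ => by rw [hprod2 n]
end

section
/- For every natural number N, Σ_{n ≥ 0, n² ≤ N} (coefficient of q^N in q^{n²} · ∏_{i=1}^{n} (1 − q^i)^{−1} ∈ ℤ⟦q⟧) equals the number of partitions of N whose successive parts differ by at least 2 (partitions b₁ ≥ b₂ ≥ ⋯ ≥ b_s of N with b_j − b_{j+1} ≥ 2 for all 1 ≤ j < s); that is, the sum side of the first Rogers–Ramanujan identity is the generating function of partitions satisfying the difference-two condition. -/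
open PowerSeries

namespace RR11

noncomputable section

open Finset
open Finset.HasAntidiagonal
open scoped Classical


open Finset
open Finset.HasAntidiagonal
open scoped Classical

/-- A convenience constructor for the power series whose coefficients indicate a subset. -/
def indicatorSeries (α : Type*) [Semiring α] (s : Set ℕ) : PowerSeries α :=
  PowerSeries.mk fun n => if n ∈ s then 1 else 0

theorem coeff_indicator {α : Type*} (s : Set ℕ) [Semiring α] (n : ℕ) :
    coeff n (indicatorSeries α s) = if n ∈ s then 1 else 0 :=
  coeff_mk _ _

theorem partialGF_prop (α : Type*) [CommSemiring α] (n : ℕ) (s : Finset ℕ) (hs : ∀ i ∈ s, 0 < i)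
    (c : ℕ → Set ℕ) (hc : ∀ i, i ∉ s → 0 ∈ c i) :
    #{p : n.Partition | (∀ j, p.parts.count j ∈ c j) ∧ ∀ j ∈ p.parts, j ∈ s} =
      coeff n (∏ i ∈ s, indicatorSeries α ((· * i) '' c i)) := by
  simp_rw [coeff_prod, coeff_indicator, prod_boole, sum_boole]
  apply congr_arg
  simp only [mem_univ, forall_true_left, not_and, not_forall, exists_prop,
    Set.mem_image, not_exists]
  set φ : (a : Nat.Partition n) →
    a ∈ filter (fun p ↦ (∀ (j : ℕ), Multiset.count j p.parts ∈ c j) ∧ ∀ j ∈ p.parts, j ∈ s) univ →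
    ℕ →₀ ℕ := fun p _ => {
      toFun := fun i => Multiset.count i p.parts • i
      support := Finset.filter (fun i => i ≠ 0) p.parts.toFinset
      mem_support_toFun := fun a => by
        simp only [smul_eq_mul, ne_eq, mul_eq_zero, Multiset.count_eq_zero]
        rw [not_or, not_not]
        simp only [Multiset.mem_toFinset, not_not, mem_filter] }
  refine Finset.card_bij φ ?_ ?_ ?_
  · intro a ha
    simp only [φ, not_forall, not_exists, not_and, exists_prop, mem_filter]
    rw [mem_finsuppAntidiag]
    dsimp only [ne_eq, smul_eq_mul, id_eq, eq_mpr_eq_cast, le_eq_subset, Finsupp.coe_mk]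
    simp only [mem_univ, forall_true_left, not_and, not_forall, exists_prop,
      mem_filter, true_and] at ha
    refine ⟨⟨?_, fun i ↦ ?_⟩, fun i _ ↦ ⟨a.parts.count i, ha.1 i, rfl⟩⟩
    · conv_rhs => simp [← a.parts_sum]
      rw [sum_multiset_count_of_subset _ s]
      · simp only [smul_eq_mul]
      · intro i
        simp only [Multiset.mem_toFinset, not_not, mem_filter]
        apply ha.2
    · simp only [ne_eq, Multiset.mem_toFinset, not_not, mem_filter, and_imp]
      exact fun hi _ ↦ ha.2 i hi
  · intro p₁ hp₁ p₂ hp₂ h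
    apply Nat.Partition.ext
    simp only [true_and, mem_univ, mem_filter] at hp₁ hp₂
    ext i
    simp only [φ, ne_eq, Multiset.mem_toFinset, not_not, smul_eq_mul, Finsupp.mk.injEq] at h
    by_cases hi : i = 0
    · rw [hi]
      rw [Multiset.count_eq_zero_of_notMem]
      · rw [Multiset.count_eq_zero_of_notMem]
        intro a; exact Nat.lt_irrefl 0 (hs 0 (hp₂.2 0 a))
      intro a; exact Nat.lt_irrefl 0 (hs 0 (hp₁.2 0 a))
    · rw [← mul_left_inj' hi]
      rw [funext_iff] at h
      exact h.2 i
  · simp only [φ, mem_filter, mem_finsuppAntidiag, mem_univ, exists_prop, true_and, and_assoc]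
    rintro f ⟨hf, hf₃, hf₄⟩
    have hf' : f ∈ finsuppAntidiag s n := mem_finsuppAntidiag.mpr ⟨hf, hf₃⟩
    simp only [mem_finsuppAntidiag] at hf'
    refine ⟨⟨∑ i ∈ s, Multiset.replicate (f i / i) i, ?_, ?_⟩, ?_, ?_, ?_⟩
    · intro i hi
      simp only [exists_prop, Multiset.mem_sum, mem_map, Function.Embedding.coeFn_mk] at hi
      rcases hi with ⟨t, ht, z⟩
      apply hs
      rwa [Multiset.eq_of_mem_replicate z]
    · simp_rw [Multiset.sum_sum, Multiset.sum_replicate, Nat.nsmul_eq_mul]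
      rw [← hf'.1]
      refine sum_congr rfl fun i hi => Nat.div_mul_cancel ?_
      rcases hf₄ i hi with ⟨w, _, hw₂⟩
      rw [← hw₂]
      exact dvd_mul_left _ _
    · intro i
      simp_rw [Multiset.count_sum', Multiset.count_replicate, sum_ite_eq']
      split_ifs with h
      · rcases hf₄ i h with ⟨w, hw₁, hw₂⟩
        rwa [← hw₂, Nat.mul_div_cancel _ (hs i h)]
      · exact hc _ h
    · intro i hi
      rw [Multiset.mem_sum] at hi
      rcases hi with ⟨j, hj₁, hj₂⟩
      rwa [Multiset.eq_of_mem_replicate hj₂]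
    · ext i
      simp_rw [Multiset.count_sum', Multiset.count_replicate, sum_ite_eq']
      simp only [ne_eq, Multiset.mem_toFinset, not_not, smul_eq_mul, ite_mul,
        zero_mul, Finsupp.coe_mk]
      split_ifs with h
      · apply Nat.div_mul_cancel
        rcases hf₄ i h with ⟨w, _, hw₂⟩
        apply Dvd.intro_left _ hw₂
      · apply symm
        rw [← Finsupp.notMem_support_iff]
        exact notMem_mono hf'.2 h

theorem one_sub_mul_indicator (i : ℕ) (hi : 1 ≤ i) :
    (1 - (X : PowerSeries ℤ) ^ i) * indicatorSeries ℤ {k | i ∣ k} = 1 := by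
  ext n
  rw [sub_mul, one_mul, map_sub, mul_comm, PowerSeries.coeff_mul_X_pow', coeff_indicator,
    PowerSeries.coeff_one]
  simp only [Set.mem_setOf_eq, coeff_indicator]
  have key : n ≠ 0 → (i ∣ n ↔ i ≤ n ∧ i ∣ n - i) := by
    intro hn
    constructor
    · intro hd
      exact ⟨Nat.le_of_dvd (Nat.pos_of_ne_zero hn) hd, Nat.dvd_sub hd dvd_rfl⟩
    · rintro ⟨hle, hd⟩
      have := Nat.dvd_add hd (dvd_refl i)
      rwa [Nat.sub_add_cancel hle] at this
  split_ifs with h1 h2 h3 h4 h5 h6 h7 <;>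
    first
      | omega
      | (exfalso; revert key; simp_all; omega)
      | (exfalso; simp_all [Nat.le_of_dvd])
      | simp_all

theorem inv_eq_indicator (inv : ℕ → PowerSeries ℤ)
    (hinv : ∀ i : ℕ, 1 ≤ i → (1 - (X : PowerSeries ℤ) ^ i) * inv i = 1)
    (i : ℕ) (hi : 1 ≤ i) : inv i = indicatorSeries ℤ {k | i ∣ k} := by
  have h1 := one_sub_mul_indicator i hi
  calc inv i = (indicatorSeries ℤ {k | i ∣ k} * (1 - (X : PowerSeries ℤ) ^ i)) * inv i := by
        rw [mul_comm (indicatorSeries ℤ {k | i ∣ k}), h1, one_mul]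
    _ = indicatorSeries ℤ {k | i ∣ k} * ((1 - (X : PowerSeries ℤ) ^ i) * inv i) := by ring
    _ = indicatorSeries ℤ {k | i ∣ k} := by rw [hinv i hi, mul_one]

theorem coeff_prod_ind (M n : ℕ) :
    coeff M (∏ i ∈ Icc 1 n, indicatorSeries ℤ {k | i ∣ k}) =
      #{p : M.Partition | ∀ j ∈ p.parts, j ≤ n} := by
  have h := partialGF_prop ℤ M (Icc 1 n) (fun i hi => (mem_Icc.mp hi).1) (fun _ => Set.univ)
      (fun _ _ => trivial)
  have himg : ∀ i ∈ Icc 1 n, indicatorSeries ℤ ((· * i) '' (Set.univ : Set ℕ)) =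
      indicatorSeries ℤ {k | i ∣ k} := by
    intro i _
    have hset : ((· * i) '' (Set.univ : Set ℕ)) = {k | i ∣ k} := by
      ext k
      simp only [Set.mem_image, Set.mem_univ, true_and, Set.mem_setOf_eq]
      constructor
      · rintro ⟨m, rfl⟩; exact Dvd.intro_left m rfl
      · rintro ⟨m, rfl⟩; exact ⟨m, mul_comm m i⟩
    rw [hset]
  rw [prod_congr rfl himg] at h
  rw [← h]
  norm_cast
  congr 1
  apply Finset.filter_congr
  intro p _
  simp only [Set.mem_univ, forall_const, true_and, eq_iff_iff]
  constructor
  · intro hp j hj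
    exact (mem_Icc.mp (hp j hj)).2
  · intro hp j hj
    exact mem_Icc.mpr ⟨p.parts_pos hj, hp j hj⟩

theorem countP_mono (s : Multiset ℕ) {p q : ℕ → Prop} [DecidablePred p] [DecidablePred q]
    (h : ∀ a, p a → q a) : s.countP p ≤ s.countP q := by
  induction s using Multiset.induction with
  | empty => simp
  | cons a t ih =>
    rw [Multiset.countP_cons, Multiset.countP_cons]
    split_ifs with h1 h2 <;> first | omega | exact absurd (h a h1) h2

theorem countP_finsetSum {ι : Type*} (t : Finset ι) (f : ι → Multiset ℕ) (p : ℕ → Prop)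
    [DecidablePred p] :
    Multiset.countP p (∑ x ∈ t, f x) = ∑ x ∈ t, Multiset.countP p (f x) := by
  induction t using Finset.induction with
  | empty => simp
  | insert a s h ih => rw [Finset.sum_insert h, Finset.sum_insert h, Multiset.countP_add, ih]

theorem countP_replicate (p : ℕ → Prop) [DecidablePred p] (k x : ℕ) :
    Multiset.countP p (Multiset.replicate k x) = if p x then k else 0 := by
  induction k with
  | zero => simp
  | succ k ih =>
    rw [Multiset.replicate_succ, Multiset.countP_cons, ih]
    split_ifs <;> omega

theorem countP_split (s : Multiset ℕ) (k : ℕ) :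
    s.countP (fun a => k ≤ a) = s.count k + s.countP (fun a => k + 1 ≤ a) := by
  induction s using Multiset.induction with
  | empty => simp
  | cons a t ih =>
    rw [Multiset.countP_cons, Multiset.countP_cons, Multiset.count_cons, ih]
    split_ifs <;> omega

theorem sum_countP_eq (n : ℕ) (s : Multiset ℕ) (hs : ∀ a ∈ s, a ≤ n) :
    ∑ j ∈ range n, s.countP (fun a => j + 1 ≤ a) = s.sum := by
  induction s using Multiset.induction with
  | empty => simp
  | cons a t ih =>
    have ha : a ≤ n := hs a (Multiset.mem_cons_self a t)
    simp only [Multiset.countP_cons, Multiset.sum_cons]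
    rw [Finset.sum_add_distrib, ih (fun b hb => hs b (Multiset.mem_cons_of_mem hb))]
    have hfil : (range n).filter (fun j => a ≥ j + 1) = range a := by
      ext x; simp only [mem_filter, mem_range]; omega
    have : ∑ j ∈ range n, (if a ≥ j + 1 then (1 : ℕ) else 0) = a := by
      rw [Finset.sum_boole, hfil, card_range]; simp
    simp only [ge_iff_le] at this
    omega

theorem map_range_getD (l : List ℕ) :
    (List.range l.length).map (fun j => l.getD j 0) = l := by
  induction l with
  | nil => simp
  | cons a t ih =>
    have hstep : (List.range (a :: t).length).map (fun j => (a :: t).getD j 0)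
        = a :: (List.range t.length).map (fun j => t.getD j 0) := by
      rw [List.length_cons, List.range_succ_eq_map, List.map_cons, List.map_map]
      simp [Function.comp, List.getD_cons_succ]
    rw [hstep, ih]

theorem chain'_getD_lower (l : List ℕ) (h : l.Chain' (fun a b => a + 2 ≤ b)) (m : ℕ)
    (hm : ∀ x ∈ l, m ≤ x) : ∀ j < l.length, m + 2 * j ≤ l.getD j 0 := by
  induction l generalizing m with
  | nil => simp
  | cons a t ih =>
    intro j hj
    haveI : IsTrans ℕ (fun a b => a + 2 ≤ b) := ⟨fun a b c h1 h2 => by omega⟩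
    have hpw := List.isChain_iff_pairwise.mp h
    have hhead : ∀ x ∈ t, a + 2 ≤ x := (List.pairwise_cons.mp hpw).1
    have ham : m ≤ a := hm a List.mem_cons_self
    cases j with
    | zero => simpa using ham
    | succ j =>
      rw [List.getD_cons_succ]
      have := ih h.tail (m + 2) (fun x hx => by have := hhead x hx; omega) j
        (by simpa using hj)
      omega

theorem sum_odds (n : ℕ) : ∑ j ∈ range n, (2 * j + 1) = n ^ 2 := by
  induction n with
  | zero => simp
  | succ n ih =>
    rw [Finset.sum_range_succ, ih]
    ring

theorem list_range_map_sum (n : ℕ) (f : ℕ → ℕ) :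
    ((List.range n).map f).sum = ∑ j ∈ range n, f j := by
  induction n with
  | zero => simp
  | succ n ih =>
    rw [List.range_succ, List.map_append, List.sum_append, Finset.sum_range_succ, ih]
    simp

theorem list_sum_eq_sum_range (l : List ℕ) :
    l.sum = ∑ j ∈ range l.length, l.getD j 0 := by
  conv_lhs => rw [← map_range_getD l]
  rw [list_range_map_sum]

theorem chain'_sq_le_sum (l : List ℕ) (h : l.Chain' (fun a b => a + 2 ≤ b))
    (hpos : ∀ x ∈ l, 1 ≤ x) : l.length ^ 2 ≤ l.sum := by
  rw [list_sum_eq_sum_range]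
  calc l.length ^ 2 = ∑ j ∈ range l.length, (2 * j + 1) := (sum_odds _).symm
    _ ≤ ∑ j ∈ range l.length, l.getD j 0 := by
        apply Finset.sum_le_sum
        intro j hj
        have := chain'_getD_lower l h 1 hpos j (mem_range.mp hj)
        omega

/-! ### The forward map -/

def fwdList (n : ℕ) (s : Multiset ℕ) : List ℕ :=
  (List.range n).map (fun j => s.countP (fun a => n - j ≤ a) + 2 * j + 1)

theorem fwd_length (n : ℕ) (s : Multiset ℕ) : (fwdList n s).length = n := by
  simp [fwdList]

theorem fwd_getD (n : ℕ) (s : Multiset ℕ) (j : ℕ) (hj : j < n) :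
    (fwdList n s).getD j 0 = s.countP (fun a => n - j ≤ a) + 2 * j + 1 := by
  rw [List.getD_eq_getElem _ _ (by rw [fwd_length]; exact hj)]
  simp [fwdList]

theorem fwd_pos (n : ℕ) (s : Multiset ℕ) : ∀ x ∈ fwdList n s, 1 ≤ x := by
  intro x hx
  simp only [fwdList, List.mem_map] at hx
  obtain ⟨j, -, rfl⟩ := hx
  omega

theorem fwd_chain (n : ℕ) (s : Multiset ℕ) :
    (fwdList n s).Chain' (fun a b => a + 2 ≤ b) := by
  rw [fwdList, List.Chain', List.isChain_map]
  cases n with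
  | zero => simp
  | succ n =>
    rw [List.isChain_range_succ]
    intro m hm
    simp only [Nat.succ_eq_add_one]
    have : s.countP (fun a => n + 1 - m ≤ a) ≤ s.countP (fun a => n + 1 - (m + 1) ≤ a) :=
      countP_mono s (fun a ha => by omega)
    omega

theorem fwd_sum (n : ℕ) (s : Multiset ℕ) (hs : ∀ a ∈ s, a ≤ n) :
    (fwdList n s).sum = s.sum + n ^ 2 := by
  rw [fwdList, list_range_map_sum]
  rw [show (fun j => s.countP (fun a => n - j ≤ a) + 2 * j + 1)
      = (fun j => s.countP (fun a => n - j ≤ a) + (2 * j + 1)) by funext j; omega]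
  rw [Finset.sum_add_distrib, sum_odds]
  congr 1
  rw [← sum_countP_eq n s hs, ← Finset.sum_range_reflect (fun j => s.countP (fun a => j + 1 ≤ a)) n]
  apply Finset.sum_congr rfl
  intro j hj
  rw [mem_range] at hj
  congr 1
  funext a
  congr 1
  omega

theorem fwd_sorted (n : ℕ) (s : Multiset ℕ) : (fwdList n s).Pairwise (· ≤ ·) := by
  haveI : IsTrans ℕ (fun a b : ℕ => a + 2 ≤ b) := ⟨fun a b c h1 h2 => by omega⟩
  have := List.isChain_iff_pairwise.mp (fwd_chain n s)
  exact this.imp (fun h => by omega)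

theorem sort_coe_of_sorted (l : List ℕ) (h : l.Pairwise (· ≤ ·)) :
    Multiset.sort (↑l : Multiset ℕ) (· ≤ ·) = l := by
  apply List.Perm.eq_of_pairwise' (Multiset.pairwise_sort _ _) h
    (Multiset.coe_eq_coe.mp (Multiset.sort_eq (↑l : Multiset ℕ) (· ≤ ·)))

/-! ### The backward map -/

def dd (l : List ℕ) (j : ℕ) : ℕ := l.getD j 0 - (2 * j + 1)

def ee (l : List ℕ) : ℕ → ℕ
  | 0 => dd l 0
  | j + 1 => dd l (j + 1) - dd l j

def bwdM (n : ℕ) (l : List ℕ) : Multiset ℕ :=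
  ∑ j ∈ Finset.range n, Multiset.replicate (ee l j) (n - j)

section bwd

variable (l : List ℕ) (hl : l.Chain' (fun a b => a + 2 ≤ b)) (hpos : ∀ x ∈ l, 1 ≤ x)

include hl hpos

theorem dd_add : ∀ j < l.length, dd l j + (2 * j + 1) = l.getD j 0 := by
  intro j hj
  have := chain'_getD_lower l hl 1 hpos j hj
  unfold dd
  omega

theorem dd_mono : ∀ j, j + 1 < l.length → dd l j ≤ dd l (j + 1) := by
  intro j hj
  have hstep : l.getD j 0 + 2 ≤ l.getD (j + 1) 0 := by
    have := List.isChain_iff_getElem.mp hl j (by omega)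
    rwa [List.getD_eq_getElem _ _ (by omega), List.getD_eq_getElem _ _ (by omega)]
  unfold dd
  have := chain'_getD_lower l hl 1 hpos j (by omega)
  omega

theorem ee_sum : ∀ j < l.length, ∑ i ∈ range (j + 1), ee l i = dd l j := by
  intro j hj
  induction j with
  | zero => simp [ee]
  | succ j ih =>
    rw [Finset.sum_range_succ, ih (by omega)]
    have := dd_mono l hl hpos j hj
    show dd l j + (dd l (j + 1) - dd l j) = dd l (j + 1)
    omega

theorem countP_bwd (k : ℕ) (hk1 : 1 ≤ k) (hkn : k ≤ l.length) :
    (bwdM l.length l).countP (fun a => k ≤ a) = dd l (l.length - k) := by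
  rw [bwdM, countP_finsetSum]
  simp_rw [countP_replicate]
  rw [← Finset.sum_filter]
  have hfil : (range l.length).filter (fun j => k ≤ l.length - j) = range (l.length - k + 1) := by
    ext x
    simp only [mem_filter, mem_range]
    omega
  rw [hfil]
  exact ee_sum l hl hpos (l.length - k) (by omega)

theorem bwd_mem : ∀ x ∈ bwdM l.length l, 1 ≤ x ∧ x ≤ l.length := by
  intro x hx
  rw [bwdM, Multiset.mem_sum] at hx
  obtain ⟨j, hj, hx⟩ := hx
  rw [Multiset.eq_of_mem_replicate hx]
  rw [mem_range] at hj
  omega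

theorem bwd_sum : (bwdM l.length l).sum + l.length ^ 2 = l.sum := by
  have hmain : (bwdM l.length l).sum = ∑ i ∈ range l.length, dd l i := by
    rw [bwdM, Multiset.sum_sum]
    simp_rw [Multiset.sum_replicate, smul_eq_mul]
    have hterm : ∀ j ∈ range l.length,
        ee l j * (l.length - j) = ∑ i ∈ range l.length, if j ≤ i then ee l j else 0 := by
      intro j hj
      rw [mem_range] at hj
      rw [← Finset.sum_filter]
      have : (range l.length).filter (fun i => j ≤ i) = Ico j l.length := by
        ext x; simp only [mem_filter, mem_range, mem_Ico]; omega
      rw [this, Finset.sum_const, Nat.card_Ico, smul_eq_mul]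
      ring
    rw [Finset.sum_congr rfl hterm, Finset.sum_comm]
    apply Finset.sum_congr rfl
    intro i hi
    rw [mem_range] at hi
    rw [← Finset.sum_filter]
    have : (range l.length).filter (fun j => j ≤ i) = range (i + 1) := by
      ext x; simp only [mem_filter, mem_range]; omega
    rw [this]
    exact ee_sum l hl hpos i hi
  rw [hmain, ← sum_odds l.length, ← Finset.sum_add_distrib, list_sum_eq_sum_range]
  apply Finset.sum_congr rfl
  intro j hj
  rw [mem_range] at hj
  exact dd_add l hl hpos j hj

theorem fwd_bwd : fwdList l.length (bwdM l.length l) = l := by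
  conv_rhs => rw [← map_range_getD l]
  rw [fwdList]
  apply List.map_congr_left
  intro j hj
  rw [List.mem_range] at hj
  rw [countP_bwd l hl hpos (l.length - j) (by omega) (by omega)]
  rw [show l.length - (l.length - j) = j by omega]
  exact dd_add l hl hpos j hj

end bwd

/-! ### backward of forward -/

theorem fwd_dd (n : ℕ) (s : Multiset ℕ) (j : ℕ) (hj : j < n) :
    dd (fwdList n s) j = s.countP (fun a => n - j ≤ a) := by
  unfold dd
  rw [fwd_getD n s j hj]
  omega

theorem bwd_fwd (n : ℕ) (s : Multiset ℕ) (hs : ∀ a ∈ s, a ≤ n) (hpos : ∀ a ∈ s, 0 < a) :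
    bwdM n (fwdList n s) = s := by
  have hcP : ∀ m : ℕ, n < m → s.countP (fun a => m ≤ a) = 0 := by
    intro m hm
    rw [Multiset.countP_eq_zero]
    intro a ha
    have := hs a ha
    omega
  ext m
  rw [bwdM, Multiset.count_sum']
  simp_rw [Multiset.count_replicate]
  rcases Nat.eq_zero_or_pos m with rfl | hm
  · rw [Finset.sum_eq_zero, eq_comm, Multiset.count_eq_zero]
    · exact fun h => by have := hpos 0 h; omega
    · intro j hj
      rw [mem_range] at hj
      rw [if_neg (by omega)]
  · by_cases hmn : m ≤ n
    · rw [Finset.sum_eq_single (n - m)]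
      · have hnm : n - m < n := by omega
        have hcount : s.count m = s.countP (fun a => m ≤ a) - s.countP (fun a => m + 1 ≤ a) := by
          have := countP_split s m
          have hle : s.countP (fun a => m + 1 ≤ a) ≤ s.countP (fun a => m ≤ a) :=
            countP_mono s (fun a ha => by omega)
          omega
        rw [if_pos (by omega)]
        cases hnm' : n - m with
        | zero =>
          have hmn' : m = n := by omega
          rw [hnm'] at *
          show ee (fwdList n s) 0 = s.count m
          rw [show ee (fwdList n s) 0 = dd (fwdList n s) 0 from rfl,
            fwd_dd n s 0 (by omega), hcount, hcP (m+1) (by omega)]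
          rw [show n - 0 = m by omega]
          omega
        | succ j =>
          show ee (fwdList n s) (j + 1) = s.count m
          rw [show ee (fwdList n s) (j + 1) = dd (fwdList n s) (j+1) - dd (fwdList n s) j from rfl,
            fwd_dd n s (j+1) (by omega), fwd_dd n s j (by omega), hcount]
          rw [show n - (j + 1) = m by omega, show n - j = m + 1 by omega]
      · intro j hj hne
        rw [mem_range] at hj
        rw [if_neg (by omega)]
      · intro h
        exact absurd (mem_range.mpr (by omega)) h
    · rw [Finset.sum_eq_zero, eq_comm, Multiset.count_eq_zero]
      · exact fun h => by have := hs m h; omega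
      · intro j hj
        rw [mem_range] at hj
        rw [if_neg (by omega)]


/-! ### The partition-level bijection -/

theorem card_fiber_eq (N n : ℕ) (hn : n ^ 2 ≤ N) :
    #(filter (fun p : (N - n ^ 2).Partition => ∀ j ∈ p.parts, j ≤ n) univ) =
    #(filter (fun q : N.Partition =>
      (Multiset.sort q.parts (· ≤ ·)).Chain' (fun a b => a + 2 ≤ b) ∧
        Multiset.card q.parts = n) univ) := by
  have hsortfwd : ∀ s : Multiset ℕ,
      Multiset.sort (↑(fwdList n s) : Multiset ℕ) (· ≤ ·) = fwdList n s :=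
    fun s => sort_coe_of_sorted _ (fwd_sorted n s)
  refine Finset.card_bij'
    (fun p hp => ⟨(↑(fwdList n p.parts) : Multiset ℕ), ?_, ?_⟩)
    (fun q hq => ⟨bwdM n (Multiset.sort q.parts (· ≤ ·)), ?_, ?_⟩) ?_ ?_ ?_ ?_
  · -- positivity of forward parts
    intro i hi
    exact fwd_pos n p.parts i (Multiset.mem_coe.mp hi)
  · -- sum of forward parts
    have hs : ∀ j ∈ p.parts, j ≤ n := (mem_filter.mp hp).2
    have h1 := fwd_sum n p.parts hs
    have h2 := p.parts_sum
    show (↑(fwdList n p.parts) : Multiset ℕ).sum = N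
    rw [Multiset.sum_coe, h1, h2]
    omega
  · -- positivity of backward parts
    intro i hi
    obtain ⟨hchain, hcard⟩ := (mem_filter.mp hq).2
    have hlen : (Multiset.sort q.parts (· ≤ ·)).length = n := by
      rw [Multiset.length_sort]; exact hcard
    rw [← hlen] at hi
    have hpos : ∀ x ∈ Multiset.sort q.parts (· ≤ ·), 1 ≤ x := fun x hx =>
      q.parts_pos (Multiset.mem_sort (· ≤ ·) |>.mp hx)
    exact (bwd_mem _ hchain hpos i hi).1
  · -- sum of backward parts
    obtain ⟨hchain, hcard⟩ := (mem_filter.mp hq).2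
    have hlen : (Multiset.sort q.parts (· ≤ ·)).length = n := by
      rw [Multiset.length_sort]; exact hcard
    have hpos : ∀ x ∈ Multiset.sort q.parts (· ≤ ·), 1 ≤ x := fun x hx =>
      q.parts_pos (Multiset.mem_sort (· ≤ ·) |>.mp hx)
    have hsum := bwd_sum _ hchain hpos
    have hlsum : (Multiset.sort q.parts (· ≤ ·)).sum = N := by
      have : (↑(Multiset.sort q.parts (· ≤ ·)) : Multiset ℕ) = q.parts :=
        Multiset.sort_eq _ _
      calc (Multiset.sort q.parts (· ≤ ·)).sum
          = (↑(Multiset.sort q.parts (· ≤ ·)) : Multiset ℕ).sum := rfl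
        _ = q.parts.sum := by rw [this]
        _ = N := q.parts_sum
    rw [hlen] at hsum
    show (bwdM n (Multiset.sort q.parts (· ≤ ·))).sum = N - n ^ 2
    omega
  · -- forward lands in the chain'-and-card filter
    intro p hp
    rw [mem_filter]
    refine ⟨mem_univ _, ?_, ?_⟩
    · show (Multiset.sort (↑(fwdList n p.parts) : Multiset ℕ) (· ≤ ·)).Chain' _
      rw [hsortfwd]
      exact fwd_chain n p.parts
    · show Multiset.card (↑(fwdList n p.parts) : Multiset ℕ) = n
      rw [Multiset.coe_card, fwd_length]
  · -- backward lands in the parts-bounded filter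
    intro q hq
    rw [mem_filter]
    obtain ⟨hchain, hcard⟩ := (mem_filter.mp hq).2
    have hlen : (Multiset.sort q.parts (· ≤ ·)).length = n := by
      rw [Multiset.length_sort]; exact hcard
    have hpos : ∀ x ∈ Multiset.sort q.parts (· ≤ ·), 1 ≤ x := fun x hx =>
      q.parts_pos (Multiset.mem_sort (· ≤ ·) |>.mp hx)
    refine ⟨mem_univ _, ?_⟩
    intro j hj
    show j ≤ n
    have hj' : j ∈ bwdM n (Multiset.sort q.parts (· ≤ ·)) := hj
    rw [← hlen] at hj'
    have := (bwd_mem _ hchain hpos j hj').2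
    omega
  · -- left inverse
    intro p hp
    apply Nat.Partition.ext
    show bwdM n (Multiset.sort (↑(fwdList n p.parts) : Multiset ℕ) (· ≤ ·)) = p.parts
    rw [hsortfwd]
    exact bwd_fwd n p.parts (mem_filter.mp hp).2 (fun a ha => p.parts_pos ha)
  · -- right inverse
    intro q hq
    apply Nat.Partition.ext
    obtain ⟨hchain, hcard⟩ := (mem_filter.mp hq).2
    have hlen : (Multiset.sort q.parts (· ≤ ·)).length = n := by
      rw [Multiset.length_sort]; exact hcard
    have hpos : ∀ x ∈ Multiset.sort q.parts (· ≤ ·), 1 ≤ x := fun x hx =>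
      q.parts_pos (Multiset.mem_sort (· ≤ ·) |>.mp hx)
    show (↑(fwdList n (bwdM n (Multiset.sort q.parts (· ≤ ·)))) : Multiset ℕ) = q.parts
    rw [← hlen]
    rw [fwd_bwd _ hchain hpos]
    exact Multiset.sort_eq _ _

/-! ### Fiberwise decomposition and the main count -/

theorem chain_card_mem (N : ℕ) (p : N.Partition)
    (h : (Multiset.sort p.parts (· ≤ ·)).Chain' (fun a b => a + 2 ≤ b)) :
    Multiset.card p.parts ∈ (range (N + 1)).filter (fun n => n ^ 2 ≤ N) := by
  have hlen : (Multiset.sort p.parts (· ≤ ·)).length = Multiset.card p.parts :=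
    Multiset.length_sort _
  have hpos : ∀ x ∈ Multiset.sort p.parts (· ≤ ·), 1 ≤ x := fun x hx =>
    p.parts_pos (Multiset.mem_sort (· ≤ ·) |>.mp hx)
  have hsum : (Multiset.sort p.parts (· ≤ ·)).sum = N := by
    calc (Multiset.sort p.parts (· ≤ ·)).sum
        = (↑(Multiset.sort p.parts (· ≤ ·)) : Multiset ℕ).sum := rfl
      _ = p.parts.sum := by rw [Multiset.sort_eq]
      _ = N := p.parts_sum
  have hsq := chain'_sq_le_sum _ h hpos
  rw [hlen, hsum] at hsq
  have hself : Multiset.card p.parts ≤ Multiset.card p.parts ^ 2 :=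
    Nat.le_self_pow (by norm_num) _
  rw [mem_filter, mem_range]
  omega

theorem main_count (N : ℕ) :
    ∑ n ∈ (range (N + 1)).filter (fun n => n ^ 2 ≤ N),
      #(filter (fun p : (N - n ^ 2).Partition => ∀ j ∈ p.parts, j ≤ n) univ) =
    #(filter (fun q : N.Partition =>
      (Multiset.sort q.parts (· ≤ ·)).Chain' (fun a b => a + 2 ≤ b)) univ) := by
  rw [Finset.card_eq_sum_card_fiberwise (f := fun q : N.Partition => Multiset.card q.parts)
    (t := (range (N + 1)).filter (fun n => n ^ 2 ≤ N))
    (fun p hp => chain_card_mem N p (mem_filter.mp hp).2)]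
  apply Finset.sum_congr rfl
  intro n hn
  rw [Finset.filter_filter]
  exact card_fiber_eq N n (mem_filter.mp hn).2

end
end RR11

/-- In `ℤ⟦q⟧`, let `inv i` denote the inverse `(1 − q^i)⁻¹` of the
unit `1 − q^i` (`i ≥ 1`).  For every natural number `N`,
`∑_{n ≥ 0, n² ≤ N}` (coefficient of `q^N` in `q^{n²} · ∏_{i=1}^{n} (1 − q^i)⁻¹`) equals
the number of partitions of `N` whose successive parts differ by at least `2`
(`b₁ ≥ ⋯ ≥ b_s` with `b_j − b_{j+1} ≥ 2`; equivalently the increasing sorted list of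
parts satisfies `a + 2 ≤ b` for consecutive entries): the sum side of the first
Rogers–Ramanujan identity is the generating function of partitions satisfying the
difference-two condition. -/
theorem statement11 (N : ℕ) (inv : ℕ → PowerSeries ℤ)
    (hinv : ∀ i : ℕ, 1 ≤ i → (1 - (X : PowerSeries ℤ) ^ i) * inv i = 1) :
    ∑ n ∈ (Finset.range (N + 1)).filter (fun n => n ^ 2 ≤ N),
      (coeff N) ((X : PowerSeries ℤ) ^ (n ^ 2) * ∏ i ∈ Finset.Icc 1 n, inv i) =
    (Nat.card {p : N.Partition //
      (p.parts.sort (· ≤ ·)).Chain' fun a b => a + 2 ≤ b} : ℤ) := by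
  classical
  have hsummand : ∀ n ∈ (Finset.range (N + 1)).filter (fun n => n ^ 2 ≤ N),
      (coeff N) ((X : PowerSeries ℤ) ^ (n ^ 2) * ∏ i ∈ Finset.Icc 1 n, inv i)
        = ((Finset.filter (fun p : (N - n ^ 2).Partition => ∀ j ∈ p.parts, j ≤ n)
            Finset.univ).card : ℤ) := by
    intro n hn
    have hn2 : n ^ 2 ≤ N := (Finset.mem_filter.mp hn).2
    rw [Finset.prod_congr rfl
      (fun i hi => RR11.inv_eq_indicator inv hinv i (Finset.mem_Icc.mp hi).1)]
    have hcoe : N = (N - n ^ 2) + n ^ 2 := by omega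
    conv_lhs => rw [hcoe]
    rw [PowerSeries.coeff_X_pow_mul]
    exact RR11.coeff_prod_ind (N - n ^ 2) n
  rw [Finset.sum_congr rfl hsummand]
  rw [Nat.card_eq_fintype_card, Fintype.card_subtype]
  rw [← Nat.cast_sum]
  exact_mod_cast congrArg (Nat.cast : ℕ → ℤ) (RR11.main_count N)
end

section
/- The three-term formal delta function identity underlying the Jacobi identity for vertex operator algebras: F₁ − F₂ = F₃ as functions ℤ³ → ℤ. Explicitly, for all (r, s, t) ∈ ℤ³: if r + s + t ≠ −1 then all three vanish and the identity is trivial, and if r + s + t = −1 then [t ≥ 0] · (−1)^t · C(−r−1, t) − [s ≥ 0] · (−1)^t · C(−r−1, s) = [r ≥ 0] · (−1)^r · C(−t−1, r), where [P] is 1 if P holds and 0 otherwise. -/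
lemma ringChoose_neg' (n k : ℕ) :
    Ring.choose (-(n:ℤ) - 1) k = (-1) ^ k * ((n + k).choose k : ℤ) := by
  have h : Ring.choose (-(n:ℤ) - 1) k = Int.multichoose ((-(n:ℤ) - 1) - k + 1) k := rfl
  have h2 : (-(n:ℤ) - 1) - k + 1 = -((n + k : ℕ) : ℤ) := by push_cast; ring
  rw [h, h2]
  cases hnk : n + k with
  | zero =>
    obtain ⟨rfl, rfl⟩ : n = 0 ∧ k = 0 := by omega
    simp [Int.multichoose]
  | succ m =>
    have : -(((m+1 : ℕ)) : ℤ) = Int.negSucc m := rfl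
    rw [this]
    simp [Int.multichoose]
    exact Or.inl (by simp [Int.negOnePow_def, zpow_natCast])

lemma negOnePow_congr' (p q : ℕ) (h : p % 2 = q % 2) : ((-1:ℤ))^p = (-1)^q := by
  rcases Nat.even_or_odd p with hp | hp
  · rw [hp.neg_one_pow, (Nat.even_iff.2 (by rw [← h]; exact Nat.even_iff.1 hp)).neg_one_pow]
  · rw [hp.neg_one_pow, (Nat.odd_iff.2 (by rw [← h]; exact Nat.odd_iff.1 hp)).neg_one_pow]

lemma key' (r s t : ℤ) (h : r + s + t = -1) :
    (if 0 ≤ t then (-1) ^ t.natAbs * Ring.choose (-r - 1) t.toNat else 0)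
      - (if 0 ≤ s then (-1) ^ t.natAbs * Ring.choose (-r - 1) s.toNat else 0)
    = (if 0 ≤ r then (-1) ^ r.natAbs * Ring.choose (-t - 1) r.toNat else 0) := by
  rcases le_or_gt 0 t with ht | ht <;> rcases le_or_gt 0 s with hs | hs <;>
    rcases le_or_gt 0 r with hr | hr
  · omega
  · -- t ≥ 0, s ≥ 0, r < 0
    rw [if_pos ht, if_pos hs, if_neg (not_le.2 hr)]
    have h1 : -r - 1 = ((s.toNat + t.toNat : ℕ) : ℤ) := by omega
    rw [h1, Ring.choose_natCast, Ring.choose_natCast]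
    have hc : (s.toNat + t.toNat).choose t.toNat = (s.toNat + t.toNat).choose s.toNat := by
      rw [← Nat.choose_symm (Nat.le_add_right s.toNat t.toNat), Nat.add_sub_cancel_left]
    rw [hc]; ring
  · -- t ≥ 0, s < 0, r ≥ 0
    rw [if_pos ht, if_neg (not_le.2 hs), if_pos hr]
    have h1 : -r - 1 = -((r.toNat : ℕ) : ℤ) - 1 := by omega
    have h2 : -t - 1 = -((t.toNat : ℕ) : ℤ) - 1 := by omega
    rw [h1, h2, ringChoose_neg', ringChoose_neg']
    have hna : r.natAbs = r.toNat := by omega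
    have hnt : t.natAbs = t.toNat := by omega
    rw [hna, hnt]
    have hc : (r.toNat + t.toNat).choose t.toNat = (t.toNat + r.toNat).choose r.toNat := by
      rw [Nat.add_comm t.toNat r.toNat,
        ← Nat.choose_symm (Nat.le_add_right r.toNat t.toNat), Nat.add_sub_cancel_left]
    rw [hc]
    have hsgn : ((-1:ℤ))^t.toNat * (-1)^t.toNat = (-1)^r.toNat * (-1)^r.toNat := by
      rw [← pow_add, ← pow_add]; exact negOnePow_congr' _ _ (by omega)
    linear_combination ((t.toNat + r.toNat).choose r.toNat : ℤ) * hsgn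
  · -- t ≥ 0, s < 0, r < 0
    rw [if_pos ht, if_neg (not_le.2 hs), if_neg (not_le.2 hr)]
    have h1 : -r - 1 = (((-r - 1).toNat : ℕ) : ℤ) := by omega
    rw [h1, Ring.choose_natCast, Nat.choose_eq_zero_of_lt (by omega)]
    ring
  · -- t < 0, s ≥ 0, r ≥ 0
    rw [if_neg (not_le.2 ht), if_pos hs, if_pos hr]
    have h1 : -r - 1 = -((r.toNat : ℕ) : ℤ) - 1 := by omega
    have h2 : -t - 1 = ((r.toNat + s.toNat : ℕ) : ℤ) := by omega
    rw [h1, h2, ringChoose_neg', Ring.choose_natCast]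
    have hna : r.natAbs = r.toNat := by omega
    have hnt : t.natAbs = r.toNat + s.toNat + 1 := by omega
    rw [hna, hnt]
    have hc : (r.toNat + s.toNat).choose s.toNat = (r.toNat + s.toNat).choose r.toNat := by
      rw [← Nat.choose_symm (Nat.le_add_right r.toNat s.toNat), Nat.add_sub_cancel_left]
    rw [hc]
    have hsgn : -(((-1:ℤ))^(r.toNat + s.toNat + 1) * (-1)^s.toNat) = (-1)^r.toNat := by
      have e1 : -(((-1:ℤ))^(r.toNat + s.toNat + 1) * (-1)^s.toNat)
          = (-1)^(r.toNat + s.toNat + 1 + s.toNat + 1) := by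
        rw [← pow_add, pow_succ]; ring
      rw [e1]; exact negOnePow_congr' _ _ (by omega)
    linear_combination ((r.toNat + s.toNat).choose r.toNat : ℤ) * hsgn
  · -- t < 0, s ≥ 0, r < 0
    rw [if_neg (not_le.2 ht), if_pos hs, if_neg (not_le.2 hr)]
    have h1 : -r - 1 = (((-r - 1).toNat : ℕ) : ℤ) := by omega
    rw [h1, Ring.choose_natCast, Nat.choose_eq_zero_of_lt (by omega)]
    ring
  · -- t < 0, s < 0, r ≥ 0
    rw [if_neg (not_le.2 ht), if_neg (not_le.2 hs), if_pos hr]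
    have h2 : -t - 1 = (((-t - 1).toNat : ℕ) : ℤ) := by omega
    rw [h2, Ring.choose_natCast, Nat.choose_eq_zero_of_lt (by omega)]
    ring
  · -- all negative: impossible since sum = -1? r+s+t ≤ -3
    rw [if_neg (not_le.2 ht), if_neg (not_le.2 hs), if_neg (not_le.2 hr)]
    ring



/-!
For `n ∈ ℤ` and `k ∈ ℕ`, `Ring.choose n k = (n(n−1)⋯(n−k+1))/k! ∈ ℤ` is the generalized
binomial coefficient.  A formal series `∑ a(r,s,t) x₀^r x₁^s x₂^t` in three commuting
formal variables with doubly infinite integer exponents is identified with its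
coefficient function `a : ℤ³ → ℤ`.  With the convention that each binomial `(u ± v)^n`
is expanded in nonnegative integral powers of the second listed summand, the three
series `x₀⁻¹δ((x₁−x₂)/x₀)`, `x₀⁻¹δ((−x₂+x₁)/x₀)` and `x₂⁻¹δ((x₁−x₀)/x₂)` have the
following coefficient functions `F₁`, `F₂`, `F₃`.  (Since the exponents involved may be
negative, `(−1)^m` for `m : ℤ` is rendered as `(−1)^m.natAbs`.)
-/

/-- Coefficient function of `x₀⁻¹δ((x₁−x₂)/x₀) = ∑_{n∈ℤ} (x₁−x₂)^n x₀^{−n−1}`. -/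
def F₁ (r s t : ℤ) : ℤ :=
  if 0 ≤ t ∧ s + t = -r - 1 then (-1) ^ t.natAbs * Ring.choose (-r - 1) t.toNat else 0

/-- Coefficient function of `x₀⁻¹δ((−x₂+x₁)/x₀) = ∑_{n∈ℤ} (−x₂+x₁)^n x₀^{−n−1}`. -/
def F₂ (r s t : ℤ) : ℤ :=
  if 0 ≤ s ∧ s + t = -r - 1 then (-1) ^ t.natAbs * Ring.choose (-r - 1) s.toNat else 0

/-- Coefficient function of `x₂⁻¹δ((x₁−x₀)/x₂) = ∑_{n∈ℤ} (x₁−x₀)^n x₂^{−n−1}`. -/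
def F₃ (r s t : ℤ) : ℤ :=
  if 0 ≤ r ∧ r + s = -t - 1 then (-1) ^ r.natAbs * Ring.choose (-t - 1) r.toNat else 0

/-- the three-term formal delta function identity underlying the
Jacobi identity for vertex operator algebras: `F₁ − F₂ = F₃` as functions `ℤ³ → ℤ`.
Explicitly: if `r + s + t ≠ −1` then all three vanish, and if `r + s + t = −1` then
`[t ≥ 0]·(−1)^t·C(−r−1,t) − [s ≥ 0]·(−1)^t·C(−r−1,s) = [r ≥ 0]·(−1)^r·C(−t−1,r)`. -/
theorem statement12 :
    (∀ r s t : ℤ, F₁ r s t - F₂ r s t = F₃ r s t) ∧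
    (∀ r s t : ℤ, r + s + t ≠ -1 → F₁ r s t = 0 ∧ F₂ r s t = 0 ∧ F₃ r s t = 0) ∧
    (∀ r s t : ℤ, r + s + t = -1 →
      (if 0 ≤ t then (-1) ^ t.natAbs * Ring.choose (-r - 1) t.toNat else 0)
        - (if 0 ≤ s then (-1) ^ t.natAbs * Ring.choose (-r - 1) s.toNat else 0)
      = (if 0 ≤ r then (-1) ^ r.natAbs * Ring.choose (-t - 1) r.toNat else 0)) := by
  refine ⟨?_, ?_, fun r s t h => key' r s t h⟩
  · intro r s t
    by_cases h : r + s + t = -1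
    · have e1 : F₁ r s t
          = if 0 ≤ t then (-1) ^ t.natAbs * Ring.choose (-r - 1) t.toNat else 0 := by
        unfold F₁
        by_cases ht : 0 ≤ t
        · rw [if_pos ⟨ht, by omega⟩, if_pos ht]
        · rw [if_neg (fun hc => ht hc.1), if_neg ht]
      have e2 : F₂ r s t
          = if 0 ≤ s then (-1) ^ t.natAbs * Ring.choose (-r - 1) s.toNat else 0 := by
        unfold F₂
        by_cases hs : 0 ≤ s
        · rw [if_pos ⟨hs, by omega⟩, if_pos hs]
        · rw [if_neg (fun hc => hs hc.1), if_neg hs]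
      have e3 : F₃ r s t
          = if 0 ≤ r then (-1) ^ r.natAbs * Ring.choose (-t - 1) r.toNat else 0 := by
        unfold F₃
        by_cases hr : 0 ≤ r
        · rw [if_pos ⟨hr, by omega⟩, if_pos hr]
        · rw [if_neg (fun hc => hr hc.1), if_neg hr]
      rw [e1, e2, e3]
      exact key' r s t h
    · have e1 : F₁ r s t = 0 := by unfold F₁; rw [if_neg (by omega)]
      have e2 : F₂ r s t = 0 := by unfold F₂; rw [if_neg (by omega)]
      have e3 : F₃ r s t = 0 := by unfold F₃; rw [if_neg (by omega)]
      rw [e1, e2, e3]; ring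
  · intro r s t h
    refine ⟨?_, ?_, ?_⟩
    · unfold F₁; rw [if_neg (by omega)]
    · unfold F₂; rw [if_neg (by omega)]
    · unfold F₃; rw [if_neg (by omega)]
end
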